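/- arXiv:2309.05902 — 4 statements merged into one kernel-verified Lean document; each statement's English description precedes it below -/
import Mathlib

section
/- For every natural number n ≥ 1, in the standard Game of Cycles, the line sub-game of type 4 — a path of n unmarked edges with pre-marked directed edges attached at both ends, both pointing in the same direction along the path (•→•—•⋯•—•→•) — has Grundy value 0 if n is even and 1 if n is odd. -/
/-- Edge state on a path/cycle: `none` = unmarked, `some true` = directed "rightwards"
(from vertex `i` to vertex `i+1`), `some false` = directed "leftwards". -/
abbrev EdgeState := Option Bool

/-- Minimum excludant of a set of naturals: the least natural number not in the set. -/
noncomputable def mex (S : Set ℕ) : ℕ := sInf {n | n ∉ S}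

/-- Generic fueled Grundy value of an impartial game with move function `moves`
(the fuel always dominates the number of remaining moves in our uses, so this
computes the Sprague–Grundy value). -/
noncomputable def grundyAux {α : Type} (moves : α → Set α) : ℕ → α → ℕ
  | 0, _ => 0
  | k+1, x => mex ((grundyAux moves k) '' (moves x))

/-- A line position (list of edge states, vertex `j+1` lying between edges `j` and
`j+1`) is admissible: no non-exempt vertex is a sink (all incident edges marked and
directed toward it) and, unless `sourceAllowed`, no non-exempt vertex is a source
(all incident edges marked and directed away from it).  The left endpoint (vertex
`0`) is exempt iff `exL`, the right endpoint iff `exR`. -/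
def LineOK (sourceAllowed exL exR : Bool) (es : List EdgeState) : Prop :=
  (∀ j, ¬ (es[j]? = some (some true) ∧ es[j+1]? = some (some false))) ∧
  (sourceAllowed = true ∨
    ∀ j, ¬ (es[j]? = some (some false) ∧ es[j+1]? = some (some true))) ∧
  (exL = true ∨ (es.head? ≠ some (some false) ∧
    (sourceAllowed = true ∨ es.head? ≠ some (some true)))) ∧
  (exR = true ∨ (es.getLast? ≠ some (some true) ∧
    (sourceAllowed = true ∨ es.getLast? ≠ some (some false))))

/-- A legal move on a line position marks an unmarked edge with one of the two
directions so that the resulting position is admissible. -/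
def lineMoves (sourceAllowed exL exR : Bool) (es : List EdgeState) :
    Set (List EdgeState) :=
  { es' | ∃ j d, es[j]? = some none ∧ es' = es.set j (some d) ∧
      LineOK sourceAllowed exL exR es' }

/-- Grundy value (Nimber) of the line (sub-)game with `n` unmarked edges.
`l` (resp. `r`) is an optional pre-marked directed edge attached at the left
(resp. right) end of the path (`some true` pointing rightwards, `some false`
pointing leftwards); the outer endpoint of a pre-marked edge is exempt from the
no-sink (and, when sources are disallowed, no-source) restriction.
`sourceAllowed = false` gives the standard Game of Cycles, `sourceAllowed = true`
gives Cycles with Sources. -/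
noncomputable def lineNim (sourceAllowed : Bool) (l r : Option Bool) (n : ℕ) : ℕ :=
  let es : List EdgeState :=
    (l.map some).toList ++ List.replicate n none ++ (r.map some).toList
  grundyAux (lineMoves sourceAllowed l.isSome r.isSome) es.length es

namespace Line4

def R (x y : EdgeState) : Prop :=
  ¬ (x = some true ∧ y = some false) ∧ ¬ (x = some false ∧ y = some true)

lemma R_none_left (y : EdgeState) : R none y := by unfold R; simp

lemma R_none_right (x : EdgeState) : R x none := by unfold R; simp

lemma R_refl (a : Bool) : R (some a) (some a) := by unfold R; cases a <;> simp

lemma R_some_some {a c : Bool} (h : R (some a) (some c)) : c = a := by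
  unfold R at h; cases a <;> cases c <;> simp_all

lemma not_R_some {a : Bool} {y : EdgeState} (h : ¬ R (some a) y) : y = some (!a) := by
  rcases y with - | c
  · exact absurd (R_none_right _) h
  · rcases a <;> rcases c <;> simp_all [R]

lemma ok_iff (es : List EdgeState) :
    LineOK false true true es ↔ List.Chain' R es := by
  constructor
  · rintro ⟨A, B, -, -⟩
    rcases B with h | B
    · simp at h
    apply List.isChain_iff_getElem.mpr
    intro i h
    have h1 : i < es.length := by omega
    have h2 : i + 1 < es.length := by omega
    constructor
    · rintro ⟨p, q⟩
      exact A i ⟨by rw [List.getElem?_eq_getElem h1, p], by rw [List.getElem?_eq_getElem h2, q]⟩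
    · rintro ⟨p, q⟩
      exact B i ⟨by rw [List.getElem?_eq_getElem h1, p], by rw [List.getElem?_eq_getElem h2, q]⟩
  · intro hc
    replace hc := List.isChain_iff_getElem.mp hc
    refine ⟨?_, Or.inr ?_, Or.inl rfl, Or.inl rfl⟩ <;>
    · rintro j ⟨p, q⟩
      obtain ⟨hj1, ep⟩ := List.getElem?_eq_some_iff.mp p
      obtain ⟨hj2, eq'⟩ := List.getElem?_eq_some_iff.mp q
      have := hc j (by omega)
      rw [ep, eq'] at this
      simp [Line4.R] at this
def Blocked (es : List EdgeState) : Prop :=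
  ∀ j d, es[j]? = some none → ¬ List.Chain' R (es.set j (some d))

lemma term_even : ∀ (N : ℕ) (es : List EdgeState) (a b : Bool), es.length ≤ N →
    List.Chain' R es → es.head? = some (some a) → es.getLast? = some (some b) →
    Blocked es → es.count none % 2 = if a = b then 0 else 1 := by
  intro N
  induction N with
  | zero =>
    intro es a b hl _ hh _ _
    cases es with
    | nil => simp at hh
    | cons x t => simp at hl
  | succ N ih =>
    rintro es a b hl hc hh hlast hb
    cases es with
    | nil => simp at hh
    | cons x t =>
    have hx : x = some a := by simpa using hh
    subst hx
    cases t with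
    | nil =>
      have hba : b = a := by
        simp [List.getLast?_singleton] at hlast
        exact hlast.symm
      subst hba
      simp [List.count_cons]
    | cons y t' =>
      rcases hy : y with - | c
      · -- y = none : first blank at position 1
        subst hy
        cases t' with
        | nil => simp [List.getLast?] at hlast
        | cons z t'' =>
          have hc1 : List.Chain' R (z :: t'') :=
            ((List.isChain_cons_cons.mp ((List.isChain_cons.mp hc).2)).2)
          -- z must be some (!a)
          have hz : z = some (!a) := by
            apply not_R_some
            intro hR
            refine hb 1 a rfl ?_
            show List.Chain' R (some a :: some a :: z :: t'')
            exact List.isChain_cons_cons.mpr ⟨R_refl a,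
              List.isChain_cons.mpr ⟨by rintro w hw; simp at hw; subst hw; exact hR, hc1⟩⟩
          subst hz
          have hbt : Blocked (some (!a) :: t'') := by
            intro j d hj hcs
            refine hb (j+2) d (by simpa using hj) ?_
            show List.Chain' R (some a :: none :: (some (!a) :: t'').set j (some d))
            exact List.isChain_cons_cons.mpr ⟨R_none_right _,
              List.isChain_cons.mpr ⟨fun w _ => R_none_left w, hcs⟩⟩
          have hlast' : (some (!a) :: t'').getLast? = some (some b) := by
            rw [List.getLast?_cons_cons, List.getLast?_cons_cons] at hlast
            exact hlast
          have := ih (some (!a) :: t'') (!a) b (by simp at hl ⊢; omega) hc1 rfl hlast' hbt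
          have hcount : (some a :: none :: some (!a) :: t'').count none
              = ((some (!a) : EdgeState) :: t'').count none + 1 := by
            simp [List.count_cons]
          rw [hcount]
          rcases a <;> rcases b <;> simp_all <;> omega
      · -- y marked: it must equal some a; recurse on the tail
        subst hy
        have hRy : R (some a) (some c) := by
          have := (List.isChain_cons.mp hc).1 (some c) rfl
          exact this
        have hca : c = a := R_some_some hRy
        rw [hca] at hc hlast hb
        have hct : List.Chain' R (some a :: t') := (List.isChain_cons.mp hc).2
        have hbt : Blocked (some a :: t') := by
          intro j d hj hcs
          have hj0 : j ≠ 0 := by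
            intro h; subst h; simp at hj
          refine hb (j+1) d (by simpa using hj) ?_
          show List.Chain' R (some a :: (some a :: t').set j (some d))
          refine List.isChain_cons.mpr ⟨?_, hcs⟩
          intro w hw
          have hhead : ((some a :: t').set j (some d)).head? = some (some a) := by
            rw [List.head?_eq_getElem?, List.getElem?_set_ne hj0]
            rfl
          rw [hhead] at hw
          simp at hw; subst hw; exact R_refl a
        have hlast' : (some a :: t').getLast? = some (some b) := by
          rw [List.getLast?_cons_cons] at hlast
          exact hlast
        have := ih (some a :: t') a b (by simp at hl ⊢; omega) hct rfl hlast' hbt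
        simpa [List.count_cons] using this

end Line4

namespace Line4

lemma mex_zero {S : Set ℕ} (h : 0 ∉ S) : mex S = 0 :=
  Nat.eq_zero_of_le_zero (Nat.sInf_le h)

lemma mex_one {S : Set ℕ} (h0 : 0 ∈ S) (h1 : 1 ∉ S) : mex S = 1 := by
  unfold mex
  have hne : (1 : ℕ) ∈ {n | n ∉ S} := h1
  have hle : sInf {n | n ∉ S} ≤ 1 := Nat.sInf_le hne
  have hmem := Nat.sInf_mem (⟨1, hne⟩ : Set.Nonempty {n | n ∉ S})
  rcases Nat.lt_or_ge (sInf {n | n ∉ S}) 1 with h | h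
  · exfalso
    have h0' : sInf {n | n ∉ S} = 0 := by omega
    rw [h0'] at hmem
    exact hmem h0
  · omega

lemma grundy_val : ∀ (m k : ℕ) (es : List EdgeState), es.count none = m → m ≤ k →
    List.Chain' R es → es.head? = some (some true) → es.getLast? = some (some true) →
    grundyAux (lineMoves false true true) k es = m % 2 := by
  intro m
  induction m using Nat.strong_induction_on with
  | _ m ih =>
  intro k es hcnt hk hc hh hlast
  rcases m with - | m'
  · -- no blanks: no moves at all
    have hmoves : lineMoves false true true es = ∅ := by
      ext es'
      simp only [lineMoves, Set.mem_setOf_eq, Set.mem_empty_iff_false, iff_false]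
      rintro ⟨j, d, hj, -, -⟩
      have hmem : (none : EdgeState) ∈ es := by
        obtain ⟨h1, h2⟩ := List.getElem?_eq_some_iff.mp hj
        rw [← h2]
        exact List.getElem_mem ..
      exact (List.count_eq_zero.mp hcnt) hmem
    rcases k with - | k
    · rfl
    · show mex ((grundyAux (lineMoves false true true) k) '' (lineMoves false true true es)) = 0
      rw [hmoves, Set.image_empty]
      exact mex_zero (by simp)
  · -- at least one blank
    rcases k with - | k'
    · omega
    have key : ∀ es' ∈ lineMoves false true true es,
        grundyAux (lineMoves false true true) k' es' = m' % 2 := by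
      rintro es' ⟨j, d, hj, rfl, hok⟩
      obtain ⟨hjlen, hget⟩ := List.getElem?_eq_some_iff.mp hj
      have hc' := (ok_iff _).mp hok
      have hj0 : j ≠ 0 := by
        intro h; subst h
        rw [← List.head?_eq_getElem?, hh] at hj
        simp at hj
      have hjl : j ≠ es.length - 1 := by
        intro h
        rw [List.getLast?_eq_getElem?] at hlast
        rw [h, hlast] at hj
        simp at hj
      have hhead' : (es.set j (some d)).head? = some (some true) := by
        rw [List.head?_eq_getElem?, List.getElem?_set_ne hj0, ← List.head?_eq_getElem?, hh]
      have hlast' : (es.set j (some d)).getLast? = some (some true) := by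
        rw [List.getLast?_eq_getElem?, List.length_set, List.getElem?_set_ne hjl,
          ← List.getLast?_eq_getElem?, hlast]
      have hgetj : es[j] = none := hget
      have hcnt' : (es.set j (some d)).count none = m' := by
        rw [List.count_set hjlen, hgetj, hcnt]
        simp
      exact ih m' (Nat.lt_succ_self m') k' _ hcnt' (by omega) hc' hhead' hlast'
    show mex ((grundyAux (lineMoves false true true) k') '' (lineMoves false true true es))
      = (m' + 1) % 2
    rcases Nat.even_or_odd m' with he | ho
    · -- m' even: children have value 0, there is a move, so mex = 1
      have hne : (lineMoves false true true es).Nonempty := by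
        by_contra hempty
        rw [Set.not_nonempty_iff_eq_empty] at hempty
        have hblocked : Blocked es := by
          intro j d hj hcs
          have : es.set j (some d) ∈ lineMoves false true true es :=
            ⟨j, d, hj, rfl, (ok_iff _).mpr hcs⟩
          rw [hempty] at this
          exact this
        have := term_even es.length es true true le_rfl hc hh hlast hblocked
        rw [hcnt] at this
        simp at this
        rw [Nat.even_iff] at he
        omega
      obtain ⟨e0, he0⟩ := hne
      have hval : grundyAux (lineMoves false true true) k' e0 = 0 := by
        rw [key e0 he0, Nat.even_iff.mp he]
      have hone : (1 : ℕ) ∉ (grundyAux (lineMoves false true true) k') ''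
          (lineMoves false true true es) := by
        rintro ⟨e1, he1, hv⟩
        rw [key e1 he1, Nat.even_iff.mp he] at hv
        exact absurd hv (by norm_num)
      have hmem : (0 : ℕ) ∈ (grundyAux (lineMoves false true true) k') ''
          (lineMoves false true true es) := ⟨e0, he0, hval⟩
      rw [mex_one hmem hone]
      rw [Nat.even_iff] at he
      omega
    · -- m' odd: children have value 1, so 0 unreachable, mex = 0
      have hzero : (0 : ℕ) ∉ (grundyAux (lineMoves false true true) k') ''
          (lineMoves false true true es) := by
        rintro ⟨e1, he1, hv⟩
        rw [key e1 he1, Nat.odd_iff.mp ho] at hv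
        exact absurd hv (by norm_num)
      rw [mex_zero hzero]
      rw [Nat.odd_iff] at ho
      omega

end Line4

namespace Line4
lemma chain_aux : ∀ (n : ℕ) (y : EdgeState),
    List.Chain' R (List.replicate n none ++ [y]) := by
  intro n
  induction n with
  | zero => intro y; exact List.isChain_singleton y
  | succ m ih =>
    intro y
    rw [List.replicate_succ, List.cons_append]
    refine List.isChain_cons.mpr ⟨fun z _ => R_none_left z, ih y⟩

lemma chain_init (n : ℕ) :
    List.Chain' R ([(some true : EdgeState)] ++ List.replicate n none ++ [some true]) := by
  rw [List.append_assoc, List.singleton_append]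
  refine List.isChain_cons.mpr ⟨?_, chain_aux n _⟩
  intro z hz
  rcases n with - | m
  · simp at hz
    subst hz
    exact R_refl _
  · rw [List.replicate_succ, List.cons_append, List.head?_cons] at hz
    simp at hz
    subst hz
    exact R_none_right _
end Line4

/-- For every `n ≥ 1`, the type-4 line sub-game of the standard
Game of Cycles (pre-marked edges at both ends pointing in the same direction along
the path, •→•—•⋯•—•→•) has Grundy value `0` if `n` is even and `1` if `n` is odd. -/
theorem line_type4_nimber_standard (n : ℕ) (hn : 1 ≤ n) :
    lineNim false (some true) (some true) n = if Even n then 0 else 1 := by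
  simp only [lineNim, Option.map_some, Option.toList_some, Option.isSome_some]
  set es0 := [(some true : EdgeState)] ++ List.replicate n none ++ [some true] with hes0
  have hcnt : es0.count none = n := by
    simp [hes0, List.count_append, List.count_replicate, List.count_cons]
  have hlen : es0.length = n + 2 := by simp [hes0]
  have hchain : List.Chain' Line4.R es0 := Line4.chain_init n
  have hhead : es0.head? = some (some true) := by
    rw [hes0, List.append_assoc, List.singleton_append, List.head?_cons]
  have hlast : es0.getLast? = some (some true) := by
    rw [hes0]; exact List.getLast?_concat
  rw [Line4.grundy_val n es0.length es0 hcnt (by omega) hchain hhead hlast]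
  rcases Nat.even_or_odd n with h | h
  · rw [if_pos h, Nat.even_iff.mp h]
  · rw [if_neg (Nat.not_even_iff_odd.mpr h), Nat.odd_iff.mp h]
end

section
/- In Cycles with Sources played on a path graph with n unmarked edges, the Grundy value for n = 1, 2, …, 18 is given in order by the sequence 0, 1, 0, 1, 0, 3, 2, 0, 2, 3, 0, 1, 0, 1, 0, 5, 7, 0; and for every n ≥ 19 the Grundy value equals the entry in position ((n − 19) mod 17) of the 17-term sequence 1, 0, 1, 0, 3, 2, 4, 5, 3, 0, 1, 0, 1, 0, 5, 7, 8 (indexed from 0). In particular, the Grundy values are eventually periodic with period 17. -/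
/-! ### listMex -/

def mexGo (l : List ℕ) : ℕ → ℕ → ℕ
  | c, 0 => c
  | c, f+1 => if c ∈ l then mexGo l (c+1) f else c

def listMex (l : List ℕ) : ℕ := mexGo l 0 (l.length + 1)

lemma mexGo_mem_of_lt (l : List ℕ) : ∀ f c m, c ≤ m → m < mexGo l c f → m ∈ l := by
  intro f
  induction f with
  | zero => intro c m h1 h2; simp only [mexGo] at h2; omega
  | succ f ih =>
    intro c m h1 h2
    simp only [mexGo] at h2
    by_cases hc : c ∈ l
    · rw [if_pos hc] at h2
      rcases eq_or_lt_of_le h1 with rfl | h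
      · exact hc
      · exact ih (c+1) m h h2
    · rw [if_neg hc] at h2; omega

lemma countP_lt_of_mem {c : ℕ} {l : List ℕ} (hc : c ∈ l) :
    l.countP (fun x => decide (c+1 ≤ x)) < l.countP (fun x => decide (c ≤ x)) := by
  induction l with
  | nil => cases hc
  | cons x t ih =>
    have hmono : t.countP (fun x => decide (c+1 ≤ x)) ≤ t.countP (fun x => decide (c ≤ x)) :=
      List.countP_mono_left (by intro a _ h; simp only [decide_eq_true_eq] at *; omega)
    have hce : t.countP (fun x => decide (c < x)) = t.countP (fun x => decide (c+1 ≤ x)) := rfl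
    simp only [List.countP_cons]
    rcases List.mem_cons.mp hc with rfl | hm
    · have h2 : ¬ (c + 1 ≤ c) := by omega
      simp [h2]
      omega
    · have := ih hm
      by_cases h2 : c + 1 ≤ x <;> by_cases h3 : c ≤ x <;> simp [h2, h3] <;> omega

lemma mexGo_not_mem (l : List ℕ) : ∀ f c, l.countP (fun x => decide (c ≤ x)) < f →
    mexGo l c f ∉ l := by
  intro f
  induction f with
  | zero => intro c h; omega
  | succ f ih =>
    intro c h
    simp only [mexGo]
    by_cases hc : c ∈ l
    · rw [if_pos hc]
      exact ih (c+1) (by have := countP_lt_of_mem hc; omega)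
    · rw [if_neg hc]; exact hc

lemma listMex_not_mem (l : List ℕ) : listMex l ∉ l := by
  apply mexGo_not_mem
  have := List.countP_le_length (p := fun x => decide (0 ≤ x)) (l := l)
  omega

lemma listMex_mem {l : List ℕ} {m : ℕ} (h : m < listMex l) : m ∈ l :=
  mexGo_mem_of_lt _ _ 0 m (Nat.zero_le _) h

lemma listMex_congr {l₁ l₂ : List ℕ} (h : ∀ x, x ∈ l₁ ↔ x ∈ l₂) :
    listMex l₁ = listMex l₂ := by
  rcases lt_trichotomy (listMex l₁) (listMex l₂) with hl | he | hl
  · exact absurd ((h _).mpr (listMex_mem hl)) (listMex_not_mem l₁)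
  · exact he
  · exact absurd ((h _).mp (listMex_mem hl)) (listMex_not_mem l₂)

/-! ### F -/

def okM (a b : Bool) (n j : ℕ) (d : Bool) : Bool :=
  !((decide (j = 0) && a && !d) || (decide (j + 1 = n) && d && !b))

def optsf (f : Bool → Bool → ℕ → ℕ) (a b : Bool) (n : ℕ) : List ℕ :=
  (List.range n).flatMap fun j =>
    ([false, true].filter fun d => okM a b n j d).map fun d =>
      f a d j ^^^ f d b (n - 1 - j)

def dfltF : Bool → Bool → ℕ := fun _ _ => 0

def tabF : ℕ → List (Bool → Bool → ℕ)
  | 0 => [dfltF]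
  | n+1 =>
    tabF n ++ [fun a b =>
      listMex (optsf (fun a' b' m => ((tabF n).getD m dfltF) a' b') a b (n+1))]

def F (a b : Bool) (n : ℕ) : ℕ := ((tabF n).getD n dfltF) a b

lemma length_tabF (n : ℕ) : (tabF n).length = n + 1 := by
  induction n with
  | zero => rfl
  | succ n ih => simp [tabF, ih]

lemma tabF_getD_succ {m n : ℕ} (h : m ≤ n) :
    (tabF (n+1)).getD m dfltF = (tabF n).getD m dfltF := by
  show (tabF n ++ _).getD m dfltF = _
  rw [List.getD_append]
  rw [length_tabF]; omega

lemma tabF_getD {m n : ℕ} (h : m ≤ n) :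
    ∀ a b, ((tabF n).getD m dfltF) a b = F a b m := by
  induction n with
  | zero =>
    have : m = 0 := by omega
    subst this; intro a b; rfl
  | succ n ih =>
    rcases Nat.eq_or_lt_of_le h with rfl | h2
    · intro a b; rfl
    · intro a b; rw [tabF_getD_succ (by omega), ih (by omega)]

lemma optsf_congr {f g : Bool → Bool → ℕ → ℕ} (a b : Bool) (n : ℕ)
    (h : ∀ a b m, m < n → f a b m = g a b m) :
    optsf f a b n = optsf g a b n := by
  unfold optsf
  rw [List.flatMap_def, List.flatMap_def]
  congr 1
  apply List.map_congr_left
  intro j hj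
  rw [List.mem_range] at hj
  apply List.map_congr_left
  intro d _
  rw [h a d j hj, h d b (n-1-j) (by omega)]

lemma F_succ (a b : Bool) (n : ℕ) :
    F a b (n+1) = listMex (optsf F a b (n+1)) := by
  show ((tabF n ++ [_]).getD (n+1) dfltF) a b = _
  have hlen := length_tabF n
  rw [List.getD_append_right _ _ _ _ (by omega), hlen, Nat.sub_self]
  show listMex _ = listMex _
  exact congrArg listMex (optsf_congr a b (n+1)
    (fun a' b' m hm => tabF_getD (by omega) a' b'))

lemma F_zero (a b : Bool) : F a b 0 = 0 := rfl

def pPre : List ℕ := [0,0,1,0,1,0,3,2,0,2,3,0,1,0,1,0,5,7,0,1,0,1,0,3,2,4,5]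
def pPer : List ℕ := [3,0,1,0,1,0,5,7,8,1,0,1,0,3,2,4,5]
def qPre : List ℕ := [0,1,2,3,1,3,2,4,5,2,3,1,3,2,1,4,2,4,1,2,3,1,3,2,4,5,2]
def qPer : List ℕ := [3,1,3,2,1,4,3,4,1,2,3,1,3,2,4,5,9]
def sPre : List ℕ := [0,1,0,1,0,3,2,0,2,3,0,1,0,1,0,5,7,0,1,0,1,0,3,2,4,5,3]
def sPer : List ℕ := [0,1,0,1,0,5,7,8,1,0,1,0,3,2,4,5,3]
def cand (a b : Bool) (n : ℕ) : ℕ :=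
  match a, b with
  | true, false => if n < 27 then pPre.getD n 0 else pPer.getD ((n - 27) % 17) 0
  | false, true => if n < 27 then sPre.getD n 0 else sPer.getD ((n - 27) % 17) 0
  | _, _ => if n < 27 then qPre.getD n 0 else qPer.getD ((n - 27) % 17) 0


lemma cand_per {n : ℕ} (h : 27 ≤ n) (a b : Bool) : cand a b (n + 17) = cand a b n := by
  have h1 : ¬ (n + 17 < 27) := by omega
  have h2 : ¬ (n < 27) := by omega
  have h3 : n + 17 - 27 = (n - 27) + 17 := by omega
  cases a <;> cases b <;>
    simp only [cand, h1, h2, if_false, h3, Nat.add_mod_right]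

lemma okM_iff {a b : Bool} {n j : ℕ} {d : Bool} :
    okM a b n j d = true ↔
      ((j = 0 → a = true → d = true) ∧ (j + 1 = n → d = true → b = true)) := by
  cases a <;> cases b <;> cases d <;>
    simp [okM, decide_eq_true_eq]

lemma mem_optsf {f : Bool → Bool → ℕ → ℕ} {a b : Bool} {n x : ℕ} :
    x ∈ optsf f a b n ↔
      ∃ j, j < n ∧ ∃ d, okM a b n j d = true ∧ x = f a d j ^^^ f d b (n - 1 - j) := by
  constructor
  · intro hx
    rw [optsf, List.mem_flatMap] at hx
    obtain ⟨j, hj, hx⟩ := hx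
    rw [List.mem_range] at hj
    rw [List.mem_map] at hx
    obtain ⟨d, hd, hx⟩ := hx
    rw [List.mem_filter] at hd
    exact ⟨j, hj, d, hd.2, hx.symm⟩
  · rintro ⟨j, hj, d, hok, rfl⟩
    rw [optsf, List.mem_flatMap]
    refine ⟨j, List.mem_range.mpr hj, ?_⟩
    rw [List.mem_map]
    refine ⟨d, List.mem_filter.mpr ⟨?_, hok⟩, rfl⟩
    cases d <;> simp

lemma optsf_shift {a b : Bool} {n : ℕ} (h : 71 ≤ n) (x : ℕ) :
    x ∈ optsf cand a b (n + 17) ↔ x ∈ optsf cand a b n := by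
  rw [mem_optsf, mem_optsf]
  constructor
  · rintro ⟨j, hj, d, hok, rfl⟩
    rw [okM_iff] at hok
    by_cases hc : j + 27 ≤ n - 1
    · refine ⟨j, by omega, d, okM_iff.mpr ⟨hok.1, by omega⟩, ?_⟩
      have e1 : n + 17 - 1 - j = (n - 1 - j) + 17 := by omega
      rw [e1, cand_per (by omega)]
    · refine ⟨j - 17, by omega, d, okM_iff.mpr ⟨by omega, ?_⟩, ?_⟩
      · intro hje; exact hok.2 (by omega)
      · have e2 : n - 1 - (j - 17) = n + 17 - 1 - j := by omega
        have hp := cand_per (n := j - 17) (by omega) a d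
        rw [Nat.sub_add_cancel (by omega : 17 ≤ j)] at hp
        rw [e2, hp]
  · rintro ⟨j, hj, d, hok, rfl⟩
    rw [okM_iff] at hok
    by_cases hc : j + 27 ≤ n - 1
    · refine ⟨j, by omega, d, okM_iff.mpr ⟨hok.1, by omega⟩, ?_⟩
      have e1 : n + 17 - 1 - j = (n - 1 - j) + 17 := by omega
      rw [e1, cand_per (by omega)]
    · refine ⟨j + 17, by omega, d, okM_iff.mpr ⟨by omega, ?_⟩, ?_⟩
      · intro hje; exact hok.2 (by omega)
      · have e2 : n + 17 - 1 - (j + 17) = n - 1 - j := by omega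
        rw [e2, cand_per (by omega)]

set_option maxRecDepth 100000 in
set_option maxHeartbeats 8000000 in
lemma base_check : ∀ n < 88, ∀ a b, listMex (optsf cand a b n) = cand a b n := by decide

lemma F_eq_cand : ∀ n (a b : Bool), F a b n = cand a b n := by
  intro n
  induction n using Nat.strong_induction_on with
  | _ n ih =>
    intro a b
    match n, ih with
    | 0, _ => cases a <;> cases b <;> rfl
    | (m+1), ih =>
      have hcongr : ∀ k, k ≤ m + 1 →
          optsf F a b k = optsf cand a b k :=
        fun k hk => optsf_congr a b k (fun a' b' m' hm' => ih m' (by omega) a' b')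
      have hrec : F a b (m+1) = listMex (optsf cand a b (m+1)) := by
        rw [F_succ, hcongr (m+1) le_rfl]
      by_cases hn : m + 1 < 88
      · rw [hrec]; exact base_check _ hn a b
      · push_neg at hn
        have h17 : m + 1 = (m - 16) + 17 := by omega
        have hs : listMex (optsf cand a b (m+1)) = listMex (optsf cand a b (m-16)) := by
          rw [h17]
          exact listMex_congr (optsf_shift (by omega))
        have hm16 : m - 16 = (m - 17) + 1 := by omega
        have hrec2 : F a b (m-16) = listMex (optsf cand a b (m-16)) := by
          rw [hm16, F_succ]
          rw [show optsf F a b (m - 17 + 1) = optsf cand a b (m - 17 + 1) from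
            optsf_congr a b _ (fun a' b' m' hm' => ih m' (by omega) a' b')]
        have hcand : cand a b (m + 1) = cand a b (m - 16) := by
          rw [h17]; exact cand_per (by omega) a b
        rw [hrec, hs, ← hrec2, hcand]
        exact ih (m - 16) (by omega) a b

/-! ### mex basics -/

lemma mex_eq_of {S : Set ℕ} {g : ℕ} (h1 : g ∉ S) (h2 : ∀ m < g, m ∈ S) : mex S = g := by
  unfold mex
  have hg : g ∈ {n | n ∉ S} := h1
  apply le_antisymm (Nat.sInf_le hg)
  by_contra hcon
  push_neg at hcon
  exact (Nat.sInf_mem ⟨g, hg⟩) (h2 _ hcon)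

/-! ### sval and legality -/

def Rrel : EdgeState → EdgeState → Prop := fun x y => ¬(x = some true ∧ y = some false)

def cLegal (a : Bool) (es : List EdgeState) (b : Bool) : Prop :=
  List.IsChain Rrel (some a :: (es ++ [some b]))

def ctxMoves (a : Bool) (es : List EdgeState) (b : Bool) : Set (List EdgeState) :=
  {es' | ∃ u d v, es = u ++ none :: v ∧ es' = u ++ some d :: v ∧ cLegal a es' b}

noncomputable def sval : Bool → ℕ → List EdgeState → Bool → ℕ
  | a, k, [], b => F a b k
  | a, k, none :: t, b => sval a (k+1) t b
  | a, k, some d :: t, b => F a d k ^^^ sval d 0 t b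

@[simp] lemma sval_nil (a : Bool) (k : ℕ) (b : Bool) : sval a k [] b = F a b k := rfl
@[simp] lemma sval_none (a : Bool) (k : ℕ) (t : List EdgeState) (b : Bool) :
    sval a k (none :: t) b = sval a (k+1) t b := rfl
@[simp] lemma sval_some (a : Bool) (k : ℕ) (d : Bool) (t : List EdgeState) (b : Bool) :
    sval a k (some d :: t) b = F a d k ^^^ sval d 0 t b := rfl

lemma svalL2 (m : ℕ) : ∀ (k : ℕ) (a b : Bool),
    sval a k (List.replicate m none) b = F a b (k + m) := by
  induction m with
  | zero => intro k a b; simp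
  | succ m ih =>
    intro k a b
    rw [List.replicate_succ, sval_none, ih]
    congr 1; omega

lemma svalL1 (u : List EdgeState) : ∀ (a : Bool) (k : ℕ) (d : Bool) (v : List EdgeState) (b : Bool),
    sval a k (u ++ some d :: v) b = sval a k u d ^^^ sval d 0 v b := by
  induction u with
  | nil => intro a k d v b; simp
  | cons x t ih =>
    intro a k d v b
    cases x with
    | none => rw [List.cons_append, sval_none, sval_none, ih]
    | some e => rw [List.cons_append, sval_some, sval_some, ih, Nat.xor_assoc]

@[simp] lemma Rrel_none_left (y : EdgeState) : Rrel none y := by simp [Rrel]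
@[simp] lemma Rrel_none_right (x : EdgeState) : Rrel x none := by simp [Rrel]

lemma chain'_none_cons {l : List EdgeState} :
    List.IsChain Rrel ((none : EdgeState) :: l) ↔ List.IsChain Rrel l := by
  rw [List.isChain_cons]
  simp

lemma chain'_repl (j : ℕ) : ∀ (x : EdgeState) (l : List EdgeState),
    List.IsChain Rrel (x :: (List.replicate j (none : EdgeState) ++ l)) ↔
      (if j = 0 then List.IsChain Rrel (x :: l) else List.IsChain Rrel l) := by
  induction j with
  | zero => intro x l; simp
  | succ j ih =>
    intro x l
    rw [List.replicate_succ, List.cons_append, List.isChain_cons,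
      if_neg (Nat.succ_ne_zero j)]
    have key : List.IsChain Rrel ((none : EdgeState) :: (List.replicate j none ++ l)) ↔
        List.IsChain Rrel l := by
      rw [ih none l]
      split_ifs with hj
      · subst hj
        simpa using chain'_none_cons
      · rfl
    rw [key]
    simp

lemma cLegal_split {a c b : Bool} {u v : List EdgeState} :
    cLegal a (u ++ some c :: v) b ↔ cLegal a u c ∧ cLegal c v b := by
  unfold cLegal
  have h : (some a :: ((u ++ some c :: v) ++ [some b]))
      = (some a :: u) ++ some c :: (v ++ [some b]) := by simp
  rw [h, List.isChain_split]
  constructor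
  · rintro ⟨h1, h2⟩
    exact ⟨by simpa using h1, h2⟩
  · rintro ⟨h1, h2⟩
    exact ⟨by simpa using h1, h2⟩

lemma Rrel_some_iff {a d : Bool} : Rrel (some a) (some d) ↔ (a = true → d = true) := by
  cases a <;> cases d <;> simp [Rrel]

lemma cLegal_repl_iff {a d b : Bool} {j m : ℕ} :
    cLegal a (List.replicate j none ++ some d :: List.replicate m none) b ↔
      ((j = 0 → a = true → d = true) ∧ (m = 0 → d = true → b = true)) := by
  unfold cLegal
  have h : ((List.replicate j (none:EdgeState) ++ some d :: List.replicate m none) ++ [some b])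
      = List.replicate j (none:EdgeState) ++ (some d :: (List.replicate m none ++ [some b])) := by
    simp
  rw [h, chain'_repl]
  have hinner : List.IsChain Rrel (some d :: (List.replicate m (none:EdgeState) ++ [some b])) ↔
      (m = 0 → d = true → b = true) := by
    rw [chain'_repl]
    split_ifs with hm
    · simp [List.isChain_pair, Rrel_some_iff, hm]
    · simp [hm]
  split_ifs with hj
  · rw [List.isChain_cons, hinner]
    simp [hj, Rrel_some_iff]
  · rw [hinner]
    simp [hj]

lemma all_none_eq_replicate {l : List EdgeState} (h : ∀ x ∈ l, x = (none : EdgeState)) :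
    l = List.replicate l.length none := by
  induction l with
  | nil => rfl
  | cons x t ih =>
    rw [List.length_cons, List.replicate_succ, h x (List.mem_cons_self),
      ih (fun y hy => h y (List.mem_cons_of_mem x hy))]
    rw [List.length_replicate]

lemma repl_decomp_move {K : ℕ} {u v : List EdgeState}
    (h : List.replicate K (none : EdgeState) = u ++ none :: v) :
    u = List.replicate u.length none ∧ v = List.replicate (K - 1 - u.length) none ∧
      u.length < K := by
  have hlen := congrArg List.length h
  simp only [List.length_replicate, List.length_append, List.length_cons] at hlen
  have hu : u = List.replicate u.length none := by
    apply all_none_eq_replicate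
    intro x hx
    exact List.eq_of_mem_replicate (h ▸ List.mem_append_left _ hx)
  have hv : v = List.replicate v.length none := by
    apply all_none_eq_replicate
    intro x hx
    exact List.eq_of_mem_replicate
      (h ▸ List.mem_append_right _ (List.mem_cons_of_mem _ hx))
  refine ⟨hu, ?_, by omega⟩
  rw [show K - 1 - u.length = v.length from by omega]
  exact hv

lemma repl_split {K j : ℕ} (h : j < K) :
    List.replicate K (none : EdgeState)
      = List.replicate j none ++ none :: List.replicate (K - 1 - j) none := by
  have e : j + ((K - 1 - j) + 1) = K := by omega
  conv_lhs => rw [← e]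
  rw [List.replicate_add]
  congr 1

lemma blanks_moves {a b : Bool} {K : ℕ} {es' : List EdgeState} :
    es' ∈ ctxMoves a (List.replicate K none) b ↔
      ∃ j, j < K ∧ ∃ d, okM a b K j d = true ∧
        es' = List.replicate j none ++ some d :: List.replicate (K - 1 - j) none := by
  constructor
  · rintro ⟨u, d, v, heq, rfl, hleg⟩
    obtain ⟨hu, hv, hlt⟩ := repl_decomp_move heq
    refine ⟨u.length, hlt, d, ?_, by rw [← hu, ← hv]⟩
    rw [hu, hv] at hleg
    rw [okM_iff]
    have := cLegal_repl_iff.mp hleg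
    exact ⟨this.1, fun hje => this.2 (by omega)⟩
  · rintro ⟨j, hj, d, hok, rfl⟩
    refine ⟨List.replicate j none, d, List.replicate (K - 1 - j) none, repl_split hj, rfl, ?_⟩
    rw [cLegal_repl_iff]
    rw [okM_iff] at hok
    exact ⟨hok.1, fun hm => hok.2 (by omega)⟩

lemma core_blanks (a b : Bool) (K : ℕ) :
    (∀ w ∈ ctxMoves a (List.replicate K none) b, sval a 0 w b ≠ F a b K) ∧
    (∀ m, m < F a b K → ∃ w ∈ ctxMoves a (List.replicate K none) b, sval a 0 w b = m) := by
  cases K with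
  | zero =>
    constructor
    · rintro w hw
      obtain ⟨j, hj, -⟩ := blanks_moves.mp hw
      omega
    · intro m hm
      rw [F_zero] at hm
      omega
  | succ K' =>
    have hF := F_succ a b K'
    constructor
    · intro w hw heq
      obtain ⟨j, hj, d, hok, rfl⟩ := blanks_moves.mp hw
      have hv : sval a 0 (List.replicate j none ++ some d :: List.replicate (K' + 1 - 1 - j) none) b
          = F a d j ^^^ F d b (K' + 1 - 1 - j) := by
        rw [svalL1, svalL2, svalL2, Nat.zero_add, Nat.zero_add]
      have hmem : F a d j ^^^ F d b (K' + 1 - 1 - j) ∈ optsf F a b (K' + 1) :=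
        mem_optsf.mpr ⟨j, hj, d, hok, rfl⟩
      rw [← hv, heq, hF] at hmem
      exact listMex_not_mem _ hmem
    · intro m hm
      rw [hF] at hm
      obtain ⟨j, hj, d, hok, hv⟩ := mem_optsf.mp (listMex_mem hm)
      refine ⟨_, blanks_moves.mpr ⟨j, hj, d, hok, rfl⟩, ?_⟩
      rw [svalL1, svalL2, svalL2, Nat.zero_add, Nat.zero_add, ← hv]

lemma ctx_decomp {a b c : Bool} {K : ℕ} {t : List EdgeState} {es' : List EdgeState}
    (hleg1 : cLegal a (List.replicate K none) c) (hleg2 : cLegal c t b) :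
    es' ∈ ctxMoves a (List.replicate K none ++ some c :: t) b ↔
      ((∃ w ∈ ctxMoves a (List.replicate K none) c, es' = w ++ some c :: t) ∨
       (∃ s ∈ ctxMoves c t b, es' = List.replicate K none ++ some c :: s)) := by
  constructor
  · rintro ⟨u, d, v, heq, rfl, hleg⟩
    rcases List.append_eq_append_iff.mp heq.symm with ⟨a', ha1, ha2⟩ | ⟨c', hc1, hc2⟩
    · -- replicate K none = u ++ a', none :: v = a' ++ some c :: t
      cases a' with
      | nil => simp at ha2
      | cons x a'' =>
        have hx : x = none := List.eq_of_mem_replicate (ha1 ▸ List.mem_append_right u (List.mem_cons_self))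
        subst hx
        have ha2' : v = a'' ++ some c :: t := by simpa using ha2
        have hdec : List.replicate K (none : EdgeState) = u ++ none :: a'' := by
          simpa using ha1
        subst ha2'
        left
        have hes : u ++ some d :: (a'' ++ some c :: t) = (u ++ some d :: a'') ++ some c :: t := by
          simp
        rw [hes] at hleg ⊢
        have hsplit := cLegal_split.mp hleg
        exact ⟨u ++ some d :: a'', ⟨u, d, a'', hdec, rfl, hsplit.1⟩, rfl⟩
    · -- u = replicate K none ++ c', some c :: t = c' ++ none :: v
      cases c' with
      | nil => simp at hc2
      | cons y c'' =>
        obtain ⟨hy, ht⟩ : y = some c ∧ t = c'' ++ none :: v := by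
          have := hc2
          rw [List.cons_append] at this
          exact ⟨(List.cons_eq_cons.mp this).1.symm, (List.cons_eq_cons.mp this).2⟩
        subst hy; subst hc1
        right
        have hes : (List.replicate K none ++ some c :: c'') ++ some d :: v
            = List.replicate K none ++ some c :: (c'' ++ some d :: v) := by simp
        rw [hes] at hleg ⊢
        have hsplit := cLegal_split.mp hleg
        exact ⟨c'' ++ some d :: v, ⟨c'', d, v, ht, rfl, hsplit.2⟩, rfl⟩
  · rintro (⟨w, ⟨u, d, v, hw1, hw2, hwleg⟩, rfl⟩ | ⟨s, ⟨u, d, v, hs1, hs2, hsleg⟩, rfl⟩)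
    · subst hw2
      refine ⟨u, d, v ++ some c :: t, by rw [hw1]; simp, by simp, ?_⟩
      exact cLegal_split.mpr ⟨hwleg, hleg2⟩
    · subst hs1; subst hs2
      refine ⟨List.replicate K none ++ some c :: u, d, v, by simp, by simp, ?_⟩
      exact cLegal_split.mpr ⟨hleg1, hsleg⟩

lemma exists_repl_decomp (es : List EdgeState) :
    ∃ K t, es = List.replicate K none ++ t ∧ (t = [] ∨ ∃ c t', t = some c :: t') := by
  induction es with
  | nil => exact ⟨0, [], rfl, Or.inl rfl⟩
  | cons x t ih =>
    cases x with
    | none =>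
      obtain ⟨K, t', h1, h2⟩ := ih
      exact ⟨K+1, t', by rw [List.replicate_succ, List.cons_append, ← h1], h2⟩
    | some c => exact ⟨0, some c :: t, rfl, Or.inr ⟨c, t, rfl⟩⟩

lemma core : ∀ (N : ℕ) (es : List EdgeState), es.length ≤ N → ∀ (a b : Bool), cLegal a es b →
    (∀ es' ∈ ctxMoves a es b, sval a 0 es' b ≠ sval a 0 es b) ∧
    (∀ m, m < sval a 0 es b → ∃ es' ∈ ctxMoves a es b, sval a 0 es' b = m) := by
  intro N
  induction N with
  | zero =>
    intro es h a b hleg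
    have he : es = [] := List.length_eq_zero_iff.mp (by omega)
    subst he
    exact core_blanks a b 0
  | succ N ih =>
    intro es hlen a b hleg
    obtain ⟨K, t, rfl, ht⟩ := exists_repl_decomp es
    rcases ht with rfl | ⟨c, t', rfl⟩
    · rw [List.append_nil] at hleg ⊢
      have hb := core_blanks a b K
      have hv : sval a 0 (List.replicate K none) b = F a b K := by
        rw [svalL2, Nat.zero_add]
      rw [hv]
      exact hb
    · have hsplit := cLegal_split.mp hleg
      have hlt : t'.length ≤ N := by
        simp only [List.length_append, List.length_replicate, List.length_cons] at hlen
        omega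
      have iht := ih t' hlt c b hsplit.2
      have hbl := core_blanks a c K
      have hval : sval a 0 (List.replicate K none ++ some c :: t') b
          = F a c K ^^^ sval c 0 t' b := by
        rw [svalL1, svalL2, Nat.zero_add]
      rw [hval]
      constructor
      · intro es' hes' heq
        rcases (ctx_decomp hsplit.1 hsplit.2).mp hes' with ⟨w, hw, rfl⟩ | ⟨s, hs, rfl⟩
        · rw [svalL1] at heq
          have hc : sval a 0 w c = F a c K := by
            have h2 := congrArg (fun z => z ^^^ sval c 0 t' b) heq
            simpa only [xor_cancel_right] using h2
          exact hbl.1 w hw hc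
        · rw [svalL1, svalL2, Nat.zero_add] at heq
          have hc : sval c 0 s b = sval c 0 t' b := by
            have h2 := congrArg (fun z => F a c K ^^^ z) heq
            simpa only [xor_cancel_left] using h2
          exact iht.1 s hs hc
      · intro m hm
        rcases Nat.lt_xor_cases hm with h1 | h2
        · obtain ⟨w, hw, hwv⟩ := hbl.2 _ h1
          refine ⟨w ++ some c :: t', (ctx_decomp hsplit.1 hsplit.2).mpr (Or.inl ⟨w, hw, rfl⟩), ?_⟩
          rw [svalL1, hwv, xor_cancel_right]
        · obtain ⟨s, hs, hsv⟩ := iht.2 _ h2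
          refine ⟨List.replicate K none ++ some c :: s,
            (ctx_decomp hsplit.1 hsplit.2).mpr (Or.inr ⟨s, hs, rfl⟩), ?_⟩
          rw [svalL1, svalL2, Nat.zero_add, hsv, Nat.xor_comm m, ← Nat.xor_assoc, Nat.xor_self, Nat.zero_xor]

lemma chain'_Rrel_iff {l : List EdgeState} :
    List.IsChain Rrel l ↔
      ∀ j, ¬(l[j]? = some (some true) ∧ l[j+1]? = some (some false)) := by
  rw [List.isChain_iff_getElem]
  constructor
  · rintro h j ⟨h1, h2⟩
    obtain ⟨hj1, e1⟩ := List.getElem?_eq_some_iff.mp h1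
    obtain ⟨hj2, e2⟩ := List.getElem?_eq_some_iff.mp h2
    have hr := h j (by omega)
    apply hr
    exact ⟨e1, e2⟩
  · intro h i hi
    intro hcon
    refine h i ⟨?_, ?_⟩
    · rw [List.getElem?_eq_some_iff]; exact ⟨by omega, hcon.1⟩
    · rw [List.getElem?_eq_some_iff]; exact ⟨by omega, hcon.2⟩

lemma lineOK_iff {es : List EdgeState} (hne : es ≠ []) :
    LineOK true false false es ↔ cLegal true es false := by
  have hlen : 0 < es.length := List.length_pos_iff.mpr hne
  unfold cLegal
  rw [chain'_Rrel_iff]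
  constructor
  · rintro ⟨c1, -, c3, c4⟩ j ⟨h1, h2⟩
    rcases c3 with h | c3; · exact absurd h (by simp)
    rcases c4 with h | c4; · exact absurd h (by simp)
    cases j with
    | zero =>
      -- h2 : (some true :: (es ++ [some false]))[1]? = some (some false)
      rw [List.getElem?_cons_succ, List.getElem?_append_left hlen] at h2
      exact c3.1 (by rw [← List.head?_eq_getElem?] at h2; exact h2)
    | succ i =>
      rw [List.getElem?_cons_succ] at h1 h2
      rcases lt_trichotomy i es.length with hi | hi | hi
      · rw [List.getElem?_append_left hi] at h1
        rcases lt_trichotomy (i+1) es.length with hi2 | hi2 | hi2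
        · rw [List.getElem?_append_left hi2] at h2
          exact c1 i ⟨h1, h2⟩
        · apply c4.1
          rw [List.getLast?_eq_getElem?, show es.length - 1 = i from by omega]
          exact h1
        · omega
      · rw [List.getElem?_append_right (by omega), hi, Nat.sub_self] at h1
        simp at h1
      · rw [List.getElem?_eq_none (by simp; omega)] at h1
        simp at h1
  · intro H
    refine ⟨?_, Or.inl rfl, Or.inr ⟨?_, Or.inl rfl⟩, Or.inr ⟨?_, Or.inl rfl⟩⟩
    · intro j ⟨h1, h2⟩
      have hj1 : j < es.length := (List.getElem?_eq_some_iff.mp h1).1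
      have hj2 : j + 1 < es.length := (List.getElem?_eq_some_iff.mp h2).1
      exact H (j+1) ⟨by rw [List.getElem?_cons_succ, List.getElem?_append_left hj1]; exact h1,
        by rw [List.getElem?_cons_succ, List.getElem?_append_left hj2]; exact h2⟩
    · intro h
      rw [List.head?_eq_getElem?] at h
      exact H 0 ⟨by simp, by rw [List.getElem?_cons_succ, List.getElem?_append_left hlen]; exact h⟩
    · intro h
      rw [List.getLast?_eq_getElem?] at h
      refine H es.length ⟨?_, ?_⟩
      · rw [show es.length = (es.length - 1) + 1 from by omega, List.getElem?_cons_succ,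
          List.getElem?_append_left (by omega)]
        exact h
      · rw [List.getElem?_cons_succ, List.getElem?_append_right (le_refl _), Nat.sub_self]
        simp

lemma getElem?_decomp {l : List EdgeState} : ∀ {j : ℕ} {x : EdgeState}, l[j]? = some x →
    ∃ u v, l = u ++ x :: v ∧ u.length = j := by
  induction l with
  | nil => intro j x h; simp at h
  | cons y t ih =>
    intro j x h
    cases j with
    | zero =>
      rw [List.getElem?_cons_zero, Option.some_inj] at h
      exact ⟨[], t, by rw [h]; rfl, rfl⟩
    | succ i =>
      rw [List.getElem?_cons_succ] at h
      obtain ⟨u, v, h1, h2⟩ := ih h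
      exact ⟨y :: u, v, by rw [List.cons_append, h1], by simp [h2]⟩

lemma set_at_length (u : List EdgeState) (x y : EdgeState) (v : List EdgeState) :
    (u ++ x :: v).set u.length y = u ++ y :: v := by
  induction u with
  | nil => rfl
  | cons z t ih => simp [List.set_cons_succ, ih]

lemma getElem?_at_length (u : List EdgeState) (x : EdgeState) (v : List EdgeState) :
    (u ++ x :: v)[u.length]? = some x := by
  rw [List.getElem?_append_right (le_refl _), Nat.sub_self]
  simp

lemma moves_eq {es : List EdgeState} (hne : es ≠ []) :
    lineMoves true false false es = ctxMoves true es false := by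
  have hlen : 0 < es.length := List.length_pos_iff.mpr hne
  ext es'
  constructor
  · rintro ⟨j, d, hj, rfl, hok⟩
    obtain ⟨u, v, rfl, hul⟩ := getElem?_decomp hj
    subst hul
    rw [set_at_length]
    refine ⟨u, d, v, rfl, rfl, ?_⟩
    rw [← lineOK_iff (by simp)]
    rwa [set_at_length] at hok
  · rintro ⟨u, d, v, rfl, rfl, hleg⟩
    refine ⟨u.length, d, ?_, ?_, ?_⟩
    · exact getElem?_at_length u none v
    · rw [set_at_length]
    · rw [lineOK_iff (by simp)]
      exact hleg

def nb (es : List EdgeState) : ℕ := es.countP (fun x => x.isNone)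

lemma nb_append (u v : List EdgeState) : nb (u ++ v) = nb u + nb v :=
  List.countP_append

lemma nb_cons_none (v : List EdgeState) : nb (none :: v) = nb v + 1 := by
  simp [nb, List.countP_cons]

lemma nb_cons_some (d : Bool) (v : List EdgeState) : nb (some d :: v) = nb v := by
  simp [nb, List.countP_cons]

lemma sval_no_blanks : ∀ (es : List EdgeState), nb es = 0 → ∀ (a b : Bool), sval a 0 es b = 0 := by
  intro es
  induction es with
  | nil => intro _ a b; rw [sval_nil, F_zero]
  | cons x t ih =>
    intro h a b
    cases x with
    | none => rw [nb_cons_none] at h; omega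
    | some d =>
      rw [nb_cons_some] at h
      rw [sval_some, F_zero, ih h, Nat.xor_self]

lemma nb_replicate (n : ℕ) : nb (List.replicate n (none : EdgeState)) = n := by
  induction n with
  | zero => rfl
  | succ n ih => rw [List.replicate_succ, nb_cons_none, ih]

lemma grundy_eq : ∀ (fuel : ℕ) (es : List EdgeState), nb es ≤ fuel → es ≠ [] →
    LineOK true false false es →
    grundyAux (lineMoves true false false) fuel es = sval true 0 es false := by
  intro fuel
  induction fuel with
  | zero =>
    intro es h hne hok
    have h0 : nb es = 0 := by omega
    rw [sval_no_blanks es h0]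
    rfl
  | succ f ih =>
    intro es h hne hok
    have hstep : grundyAux (lineMoves true false false) (f+1) es
        = mex ((grundyAux (lineMoves true false false) f) '' (lineMoves true false false es)) :=
      rfl
    rw [hstep]
    by_cases h0 : nb es = 0
    · have hemp : lineMoves true false false es = ∅ := by
        ext es'
        simp only [Set.mem_empty_iff_false, iff_false]
        rintro ⟨j, d, hj, -, -⟩
        obtain ⟨hjl, he⟩ := List.getElem?_eq_some_iff.mp hj
        have hmem : (none : EdgeState) ∈ es := he ▸ List.getElem_mem hjl
        have hpos : 0 < nb es := List.countP_pos_iff.mpr ⟨none, hmem, rfl⟩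
        omega
      rw [hemp, Set.image_empty, sval_no_blanks es h0]
      exact mex_eq_of (by simp) (by omega)
    · have hleg := (lineOK_iff hne).mp hok
      have himg : (grundyAux (lineMoves true false false) f) '' (lineMoves true false false es)
          = (fun es' => sval true 0 es' false) '' (ctxMoves true es false) := by
        rw [moves_eq hne]
        apply Set.image_congr
        rintro es' ⟨u, d, v, huv, rfl, hleg'⟩
        apply ih
        · rw [huv, nb_append, nb_cons_none] at h
          rw [nb_append, nb_cons_some]
          omega
        · simp
        · rw [lineOK_iff (by simp)]
          exact hleg'
      rw [himg]
      have hcore := core es.length es le_rfl true false hleg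
      apply mex_eq_of
      · rintro ⟨es', hes', heq⟩
        exact hcore.1 es' hes' heq
      · intro m hm
        obtain ⟨es', hes', hv⟩ := hcore.2 m hm
        exact ⟨es', hes', hv⟩

lemma lineNim_eq_F {n : ℕ} (hn : 1 ≤ n) :
    lineNim true none none n = F true false n := by
  have hne : (List.replicate n (none : EdgeState)) ≠ [] := by
    simp only [ne_eq, List.replicate_eq_nil_iff]
    omega
  have hok : LineOK true false false (List.replicate n none) := by
    rw [lineOK_iff hne]
    unfold cLegal
    rw [chain'_repl, if_neg (by omega)]
    exact List.isChain_singleton _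
  have hmain := grundy_eq n (List.replicate n none) (le_of_eq (nb_replicate n)) hne hok
  show grundyAux (lineMoves true false false) (List.length _) _ = _
  simp only [Option.map_none, Option.toList_none, List.nil_append, List.append_nil,
    Option.isSome_none, List.length_replicate]
  rw [hmain, svalL2, Nat.zero_add]

lemma per_match : ∀ r < 17, pPer.getD r 0
    = ([1,0,1,0,3,2,4,5,3,0,1,0,1,0,5,7,8] : List ℕ).getD ((r + 8) % 17) 0 := by decide


/-- The Grundy values of Cycles with Sources on a path with `n`
unmarked edges: for `n = 1, …, 18` they are `0,1,0,1,0,3,2,0,2,3,0,1,0,1,0,5,7,0`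
in order, and for `n ≥ 19` they repeat the 17-term sequence
`1,0,1,0,3,2,4,5,3,0,1,0,1,0,5,7,8` (so they are eventually periodic
with period 17). -/
theorem cws_line_nimbers :
    (∀ n, 1 ≤ n → n ≤ 18 →
      lineNim true none none n =
        ([0,1,0,1,0,3,2,0,2,3,0,1,0,1,0,5,7,0] : List ℕ).getD (n - 1) 0) ∧
    (∀ n, 19 ≤ n →
      lineNim true none none n =
        ([1,0,1,0,3,2,4,5,3,0,1,0,1,0,5,7,8] : List ℕ).getD ((n - 19) % 17) 0) := by
  constructor
  · intro n h1 h2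
    rw [lineNim_eq_F h1, F_eq_cand]
    interval_cases n <;> rfl
  · intro n h19
    rw [lineNim_eq_F (by omega : 1 ≤ n), F_eq_cand]
    by_cases h27 : n < 27
    · interval_cases n <;> rfl
    · push_neg at h27
      rw [show cand true false n = pPer.getD ((n - 27) % 17) 0 from by
        show (if n < 27 then pPre.getD n 0 else pPer.getD ((n - 27) % 17) 0) = _
        rw [if_neg (by omega)]]
      have hmod : (n - 19) % 17 = ((n - 27) % 17 + 8) % 17 := by omega
      rw [hmod]
      have hlt : (n - 27) % 17 < 17 := Nat.mod_lt _ (by norm_num)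
      exact per_match ((n - 27) % 17) hlt
end

section
/- For every natural number n ≥ 2, the Grundy value (Nimber) of the standard Game of Cycles played on a graph consisting of a single cycle with n edges is 0 if n is even and 1 if n is odd. -/
/-- A cycle position with edges `0, …, n-1` (edge `j` directed by `some true` from
vertex `j` to vertex `j+1 (mod n)`) is admissible: no vertex is a sink, and,
unless `sourceAllowed`, no vertex is a source. -/
def CycleOK (sourceAllowed : Bool) (es : List EdgeState) : Prop :=
  ∀ j < es.length,
    ¬ (es[j]? = some (some true) ∧
        es[(j+1) % es.length]? = some (some false)) ∧
    (sourceAllowed = true ∨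
      ¬ (es[j]? = some (some false) ∧
          es[(j+1) % es.length]? = some (some true)))

/-- A legal move on a cycle position marks an unmarked edge with one of the two
directions so that the resulting position is admissible. -/
def cycleMoves (sourceAllowed : Bool) (es : List EdgeState) : Set (List EdgeState) :=
  { es' | ∃ j d, es[j]? = some none ∧ es' = es.set j (some d) ∧
      CycleOK sourceAllowed es' }

/-- Grundy value (Nimber) of the game played on a single cycle with `n` edges,
all initially unmarked. -/
noncomputable def cycleNim (sourceAllowed : Bool) (n : ℕ) : ℕ :=
  grundyAux (cycleMoves sourceAllowed) n (List.replicate n none)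

lemma mex_empty : mex (∅ : Set ℕ) = 0 := by
  rw [mex, Nat.sInf_eq_zero]; left; simp

lemma mex_zero : mex ({0} : Set ℕ) = 1 := by
  have h1 : (1:ℕ) ∈ {n : ℕ | n ∉ ({0}:Set ℕ)} := by simp
  refine le_antisymm (Nat.sInf_le h1) ?_
  rw [Nat.one_le_iff_ne_zero]
  intro h0
  rcases Nat.sInf_eq_zero.mp h0 with h | h
  · simp at h
  · rw [Set.eq_empty_iff_forall_notMem] at h; exact h 1 h1

lemma mex_one : mex ({1} : Set ℕ) = 0 := by
  rw [mex, Nat.sInf_eq_zero]; left; simp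

lemma mex_pred (c : ℕ) (hc : 0 < c) : mex {(c-1) % 2} = c % 2 := by
  rcases Nat.even_or_odd c with h | h
  · rw [Nat.even_iff] at h
    have h1 : (c-1) % 2 = 1 := by omega
    rw [h1, mex_one]; omega
  · rw [Nat.odd_iff] at h
    have h1 : (c-1) % 2 = 0 := by omega
    rw [h1, mex_zero]; omega

lemma cyc_right_inv {n j : ℕ} (h : j < n) : ((j+1) % n + n - 1) % n = j := by
  rcases Nat.lt_or_ge (j+1) n with h1 | h1
  · rw [Nat.mod_eq_of_lt h1]
    have e : j + 1 + n - 1 = j + n := by omega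
    rw [e, Nat.add_mod_right, Nat.mod_eq_of_lt h]
  · have e : j + 1 = n := by omega
    rw [e, Nat.mod_self]
    have e2 : 0 + n - 1 = n - 1 := by omega
    rw [e2, Nat.mod_eq_of_lt (by omega)]; omega

lemma cyc_left_inv {n i : ℕ} (h : i < n) : ((i + n - 1) % n + 1) % n = i := by
  rcases Nat.eq_zero_or_pos i with rfl | hi
  · have e0 : 0 + n - 1 = n - 1 := by omega
    have e : (n - 1) % n = n - 1 := Nat.mod_eq_of_lt (by omega)
    rw [e0, e]
    have e2 : n - 1 + 1 = n := by omega
    rw [e2, Nat.mod_self]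
  · have e : i + n - 1 = (i - 1) + n := by omega
    have e3 : (i - 1) % n = i - 1 := Nat.mod_eq_of_lt (by omega)
    rw [e, Nat.add_mod_right, e3]
    have e2 : i - 1 + 1 = i := by omega
    rw [e2, Nat.mod_eq_of_lt h]

lemma cyc_succ_ne {n i : ℕ} (h : i < n) (h2 : 2 ≤ n) : (i+1) % n ≠ i := by
  rcases Nat.lt_or_ge (i+1) n with h1 | h1
  · rw [Nat.mod_eq_of_lt h1]; omega
  · have e : i + 1 = n := by omega
    rw [e, Nat.mod_self]; omega

lemma count_set_aux (d : Bool) : ∀ (es : List EdgeState) (j : ℕ),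
    es[j]? = some none → (es.set j (some d)).count none + 1 = es.count none := by
  intro es
  induction es with
  | nil => intro j h; simp at h
  | cons a t ih =>
    intro j h
    cases j with
    | zero =>
      simp only [List.getElem?_cons_zero] at h
      injection h with h; subst h
      simp [List.count_cons]
    | succ j =>
      simp only [List.getElem?_cons_succ] at h
      have := ih j h
      simp only [List.set, List.count_cons]
      omega

lemma count_eq_sum (es : List EdgeState) :
    ∑ j ∈ Finset.range es.length, (if es[j]? = some none then (1 : ZMod 2) else 0)
      = (es.count none : ZMod 2) := by
  induction es with
  | nil => simp
  | cons a t ih =>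
    rw [List.length_cons, Finset.sum_range_succ']
    simp only [List.getElem?_cons_succ, List.getElem?_cons_zero]
    rw [ih, List.count_cons]
    cases a <;> simp [add_comm]

lemma cycleOK_pair {es : List EdgeState} (h : CycleOK false es) {j : ℕ} (hj : j < es.length)
    {d d' : Bool} (h1 : es[j]? = some (some d))
    (h2 : es[(j+1) % es.length]? = some (some d')) : d' = d := by
  obtain ⟨ha, hb⟩ := h j hj
  rcases hb with hb | hb
  · simp at hb
  · cases d <;> cases d' <;> simp_all

def deadEdge (es : List EdgeState) (i : ℕ) : Prop :=
  ∃ d : Bool, es[(i+1) % es.length]? = some (some d) ∧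
    es[(i + es.length - 1) % es.length]? = some (some !d)

lemma dead_of_noMove {es : List EdgeState} (hok : CycleOK false es) (hn : 2 ≤ es.length)
    (hmv : ∀ es', es' ∉ cycleMoves false es) {i : ℕ} (hi : es[i]? = some none) :
    deadEdge es i := by
  have hilt : i < es.length := (List.getElem?_eq_some_iff.mp hi).1
  have key : ∀ d : Bool, es[(i+1) % es.length]? = some (some !d) ∨
      es[(i + es.length - 1) % es.length]? = some (some !d) := by
    intro d
    have h1 := hmv (es.set i (some d))
    have hno : ¬ CycleOK false (es.set i (some d)) := fun hok' =>
      h1 ⟨i, d, hi, rfl, hok'⟩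
    rw [CycleOK] at hno
    push_neg at hno
    simp only [List.length_set] at hno
    obtain ⟨j, hj, hbad⟩ := hno
    -- extract a bad pair
    have hpair : ∃ b : Bool, (es.set i (some d))[j]? = some (some b) ∧
        (es.set i (some d))[(j+1) % es.length]? = some (some !b) := by
      by_cases p1 : (es.set i (some d))[j]? = some (some true) ∧
          (es.set i (some d))[(j+1) % es.length]? = some (some false)
      · exact ⟨true, p1.1, p1.2⟩
      · by_cases p2 : (es.set i (some d))[j]? = some (some false) ∧
            (es.set i (some d))[(j+1) % es.length]? = some (some true)
        · exact ⟨false, p2.1, p2.2⟩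
        · have h2 := hbad (by tauto)
          exact ⟨false, h2.2.1, by simpa using h2.2.2⟩
    obtain ⟨b, hb1, hb2⟩ := hpair
    have hset : ∀ m, m ≠ i → (es.set i (some d))[m]? = es[m]? := by
      intro m hm
      rw [List.getElem?_set]
      simp [Ne.symm hm]
    have hseti : (es.set i (some d))[i]? = some (some d) := by
      rw [List.getElem?_set_self', hi]
      rfl
    by_cases hji : j = i
    · subst hji
      have hbd : b = d := by
        rw [hseti] at hb1
        injection hb1 with h
        injection h with h
        exact h.symm
      subst hbd
      have hne : (j+1) % es.length ≠ j := cyc_succ_ne hj hn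
      rw [hset _ hne] at hb2
      exact Or.inl hb2
    · rw [hset _ hji] at hb1
      by_cases hki : (j+1) % es.length = i
      · rw [hki, hseti] at hb2
        have hbd : d = !b := by injection hb2 with h; injection h
        have hjval : j = (i + es.length - 1) % es.length := by
          rw [← hki]; exact (cyc_right_inv hj).symm
        right
        rw [← hjval, hb1, hbd]
        simp
      · rw [hset _ hki] at hb2
        have := cycleOK_pair hok hj hb1 hb2
        simp at this
  rcases key true with h1 | h1 <;> rcases key false with h2 | h2
  · rw [h1] at h2; simp at h2
  · exact ⟨false, by simpa using h1, by simpa using h2⟩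
  · exact ⟨true, by simpa using h2, by simpa using h1⟩
  · rw [h1] at h2; simp at h2

lemma terminal_even {es : List EdgeState} (hok : CycleOK false es) (hn : 2 ≤ es.length)
    (hdead : ∀ i, es[i]? = some none → deadEdge es i) :
    es.count none % 2 = 0 := by
  have hnpos : 0 < es.length := by omega
  set s : ℕ → ZMod 2 := fun j =>
    if es[j]? = some (some true) then 1
    else if es[j]? = some (some false) then 0
    else if es[(j + es.length - 1) % es.length]? = some (some true) then 1 else 0 with hs
  have sval : ∀ {j : ℕ} {d : Bool}, es[j]? = some (some d) →
      s j = (if d then 1 else 0) := by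
    intro j d hj
    simp only [hs]
    rw [hj]
    cases d <;> simp
  have step : ∀ j < es.length,
      s ((j+1) % es.length) = s j + (if es[j]? = some none then 1 else 0) := by
    intro j hj
    have hklt : (j+1) % es.length < es.length := Nat.mod_lt _ hnpos
    obtain ⟨x, hx⟩ : ∃ x, es[j]? = some x := by
      rw [List.getElem?_eq_getElem hj]; exact ⟨_, rfl⟩
    obtain ⟨y, hy⟩ : ∃ y, es[(j+1) % es.length]? = some y := by
      rw [List.getElem?_eq_getElem hklt]; exact ⟨_, rfl⟩
    match x, hx with
    | some d, hx =>
      rw [hx, if_neg (by simp), add_zero, sval hx]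
      match y, hy with
      | some d', hy =>
        have hdd : d' = d := cycleOK_pair hok hj hx hy
        subst hdd
        exact sval hy
      | none, hy =>
        have hleft : ((j+1) % es.length + es.length - 1) % es.length = j :=
          cyc_right_inv hj
        have hsk : s ((j+1) % es.length) = if es[j]? = some (some true) then 1 else 0 := by
          simp only [hs]
          rw [hy, if_neg (by simp), if_neg (by simp), hleft]
        rw [hsk, hx]
        cases d <;> simp
    | none, hx =>
      obtain ⟨d, hr, hl⟩ := hdead j hx
      rw [hx, if_pos rfl, sval hr]
      have hsj : s j = if d then 0 else 1 := by
        simp only [hs]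
        rw [hx, if_neg (by simp), if_neg (by simp), hl]
        cases d <;> simp
      rw [hsj]
      cases d <;> decide
  have tele : ∑ j ∈ Finset.range es.length, s ((j+1) % es.length)
      = ∑ j ∈ Finset.range es.length, s j := by
    apply Finset.sum_nbij' (i := fun j => (j+1) % es.length)
      (j := fun j => (j + es.length - 1) % es.length)
    · intro a ha; exact Finset.mem_range.mpr (Nat.mod_lt _ hnpos)
    · intro a ha; exact Finset.mem_range.mpr (Nat.mod_lt _ hnpos)
    · intro a ha; exact cyc_right_inv (Finset.mem_range.mp ha)
    · intro a ha; exact cyc_left_inv (Finset.mem_range.mp ha)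
    · intro a ha; rfl
  have sum0 : ∑ j ∈ Finset.range es.length,
      (if es[j]? = some none then (1 : ZMod 2) else 0) = 0 := by
    have h2 := Finset.sum_congr rfl (fun j hj => step j (Finset.mem_range.mp hj))
    rw [tele, Finset.sum_add_distrib] at h2
    nth_rewrite 1 [← add_zero (∑ j ∈ Finset.range es.length, s j)] at h2
    exact (add_left_cancel h2).symm
  rw [count_eq_sum es] at sum0
  have hdvd : 2 ∣ es.count none := by
    rwa [ZMod.natCast_eq_zero_iff] at sum0
  omega

lemma grundy_cycle : ∀ (k : ℕ) (es : List EdgeState), 2 ≤ es.length → CycleOK false es →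
    es.count none ≤ k → grundyAux (cycleMoves false) k es = es.count none % 2 := by
  intro k
  induction k with
  | zero =>
    intro es h2 hok hc
    have h0 : es.count none = 0 := Nat.le_zero.mp hc
    rw [h0]
    rfl
  | succ k ih =>
    intro es h2 hok hc
    have hstep : grundyAux (cycleMoves false) (k+1) es
        = mex ((grundyAux (cycleMoves false) k) '' (cycleMoves false es)) := rfl
    rw [hstep]
    by_cases hmv : ∃ es', es' ∈ cycleMoves false es
    · obtain ⟨es0, hes0⟩ := hmv
      have hval : ∀ es' ∈ cycleMoves false es,
          grundyAux (cycleMoves false) k es' = (es.count none - 1) % 2 := by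
        rintro es' ⟨j, d, hj, rfl, hok'⟩
        have hcnt := count_set_aux d es j hj
        have hlen : (es.set j (some d)).length = es.length := List.length_set
        have := ih (es.set j (some d)) (by rw [hlen]; exact h2) hok' (by omega)
        rw [this]
        congr 1
        omega
      have hpos : 0 < es.count none := by
        obtain ⟨j, d, hj, _, _⟩ := hes0
        exact List.count_pos_iff.mpr (List.mem_of_getElem? hj)
      have himg : (grundyAux (cycleMoves false) k) '' (cycleMoves false es)
          = {(es.count none - 1) % 2} := by
        apply Set.eq_singleton_iff_unique_mem.mpr
        constructor
        · exact ⟨es0, hes0, hval es0 hes0⟩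
        · rintro v ⟨es', hes', rfl⟩
          exact hval es' hes'
      rw [himg]
      exact mex_pred _ hpos
    · push_neg at hmv
      have himg : cycleMoves false es = ∅ := Set.eq_empty_iff_forall_notMem.mpr hmv
      rw [himg, Set.image_empty, mex_empty]
      exact (terminal_even hok h2 (fun i hi => dead_of_noMove hok h2 hmv hi)).symm

/-- For every `n ≥ 2`, the Grundy value of the standard Game of
Cycles on a single cycle with `n` edges is `0` if `n` is even and `1` if `n` is odd. -/
theorem cycle_nimber_standard (n : ℕ) (hn : 2 ≤ n) :
    cycleNim false n = if Even n then 0 else 1 := by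
  have hlen : (List.replicate n (none : EdgeState)).length = n := List.length_replicate
  have hok : CycleOK false (List.replicate n none) := by
    intro j hj
    constructor
    · rintro ⟨h1, -⟩
      have := List.eq_of_mem_replicate (List.mem_of_getElem? h1)
      simp at this
    · right
      rintro ⟨h1, -⟩
      have := List.eq_of_mem_replicate (List.mem_of_getElem? h1)
      simp at this
  have hcnt : (List.replicate n (none : EdgeState)).count none = n := by
    simp [List.count_replicate]
  have hmain := grundy_cycle n (List.replicate n none) (by rw [hlen]; exact hn) hok
    (le_of_eq hcnt)
  rw [cycleNim, hmain, hcnt]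
  rcases Nat.even_or_odd n with h | h
  · rw [if_pos h, Nat.even_iff.mp h]
  · rw [if_neg (Nat.not_even_iff_odd.mpr h), Nat.odd_iff.mp h]
end

section
/- For every natural number n ≥ 2, the Grundy value (Nimber) of Cycles with Sources played on a graph consisting of a single cycle with n edges is 0; in particular, the second player always wins. -/
/-- `Loses moves k x` (with fuel `k` dominating the number of remaining moves):
the player to move at position `x` loses under normal play, i.e. every move leads
to a position from which the opponent has a move back into a losing position. -/
def Loses {α : Type} (moves : α → Set α) : ℕ → α → Prop
  | 0, _ => True
  | k+1, x => ∀ y ∈ moves x, ∃ z ∈ moves y, Loses moves k z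

namespace CWS


def E (n : ℕ) (es : List EdgeState) (i : ZMod n) : EdgeState :=
  (es[i.val]?).getD none

def marked (n : ℕ) (es : List EdgeState) (i : ZMod n) : Prop := E n es i ≠ none

def hitV (n : ℕ) (es : List EdgeState) (i : ZMod n) : Prop :=
  E n es (i-1) = some true ∨ E n es i = some false

lemma Eget {n : ℕ} {es : List EdgeState} (hlen : es.length = n) {j : ℕ} (hj : j < n) :
    es[j]? = some (E n es ((j : ZMod n))) := by
  haveI : NeZero n := ⟨by omega⟩
  have hv : ((j : ZMod n)).val = j := ZMod.val_cast_of_lt hj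
  cases h : es[j]? with
  | none => exact absurd (List.getElem?_eq_none_iff.mp h) (by omega)
  | some a => simp only [E, hv, h, Option.getD_some]

lemma Eget' {n : ℕ} {es : List EdgeState} (hlen : es.length = n) (hn : 0 < n) (i : ZMod n) :
    es[i.val]? = some (E n es i) := by
  haveI : NeZero n := ⟨by omega⟩
  have := Eget hlen (ZMod.val_lt i)
  rwa [ZMod.natCast_rightInverse i] at this

lemma E_set {n : ℕ} {es : List EdgeState} (hlen : es.length = n) {j : ℕ} (hj : j < n)
    (a : EdgeState) (i : ZMod n) :
    E n (es.set j a) i = if i = (j : ZMod n) then a else E n es i := by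
  haveI : NeZero n := ⟨by omega⟩
  by_cases h : i = (j : ZMod n)
  · subst h
    have hv : ((j : ZMod n)).val = j := ZMod.val_cast_of_lt hj
    simp only [if_pos rfl, E, hv]
    rw [List.getElem?_set_self (by omega)]
    simp
  · have hv : i.val ≠ j := by
      intro he
      exact h (by rw [← he, ZMod.natCast_rightInverse i])
    simp only [if_neg h, E]
    rw [List.getElem?_set_ne (fun hh => hv hh.symm)]

lemma E_replicate {n : ℕ} (i : ZMod n) : E n (List.replicate n none) i = none := by
  cases h : (List.replicate n (none : EdgeState))[i.val]? with
  | none => simp only [E, h, Option.getD_none]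
  | some a =>
    have := List.eq_of_mem_replicate (List.mem_of_getElem? h)
    simp only [E, h, Option.getD_some, this]



lemma sub_one_ne_self {n : ℕ} (hn : 2 ≤ n) (i : ZMod n) : i - 1 ≠ i := by
  haveI : Fact (1 < n) := ⟨by omega⟩
  intro h
  have h1 : (1 : ZMod n) = 0 := by
    have := sub_eq_iff_eq_add.mp h
    nth_rewrite 1 [← add_zero i] at this
    exact (add_left_cancel this).symm
  exact one_ne_zero h1

lemma add_one_ne_self {n : ℕ} (hn : 2 ≤ n) (i : ZMod n) : i + 1 ≠ i := by
  haveI : Fact (1 < n) := ⟨by omega⟩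
  intro h
  nth_rewrite 2 [← add_zero i] at h
  exact one_ne_zero (add_left_cancel h)

lemma marked_set {n : ℕ} {es : List EdgeState} (hlen : es.length = n) {j : ℕ} (hj : j < n)
    (d : Bool) (i : ZMod n) :
    marked n (es.set j (some d)) i ↔ marked n es i ∨ i = (j : ZMod n) := by
  unfold marked
  rw [E_set hlen hj]
  by_cases h : i = (j : ZMod n) <;> simp [h]

lemma hitV_set {n : ℕ} {es : List EdgeState} (hn : 2 ≤ n) (hlen : es.length = n) {j : ℕ}
    (hj : j < n) (hE : E n es ((j : ZMod n)) = none) (d : Bool) (i : ZMod n) :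
    hitV n (es.set j (some d)) i ↔ hitV n es i ∨ i = (j : ZMod n) + (if d then 1 else 0) := by
  unfold hitV
  rw [E_set hlen hj, E_set hlen hj]
  cases d
  · simp only [Bool.false_eq_true, if_false, add_zero]
    by_cases h2 : i = (j : ZMod n)
    · have h1 : i - 1 ≠ (j : ZMod n) := by rw [h2]; rw [h2] at *; exact sub_one_ne_self hn _
      rw [if_pos h2, if_neg h1]
      simp [h2]
    · rw [if_neg h2]
      by_cases h1 : i - 1 = (j : ZMod n)
      · rw [if_pos h1]
        have hE' : E n es (i - 1) = none := by rw [h1]; exact hE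
        simp [hE', h2]
      · rw [if_neg h1]
        simp [h2]
  · simp only [if_true]
    have hiff : i = (j : ZMod n) + 1 ↔ i - 1 = (j : ZMod n) := by
      rw [sub_eq_iff_eq_add]
    by_cases h1 : i - 1 = (j : ZMod n)
    · rw [if_pos h1]
      simp [hiff.mpr h1]
    · rw [if_neg h1]
      by_cases h2 : i = (j : ZMod n)
      · rw [if_pos h2]
        have hE' : E n es i = none := by rw [h2]; exact hE
        simp [hE', hiff, h1]
      · rw [if_neg h2]
        simp [hiff, h1]

lemma E_mono {n : ℕ} {es : List EdgeState} (hlen : es.length = n) {j : ℕ} (hj : j < n)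
    (hE : E n es ((j : ZMod n)) = none) (d : Bool) {i : ZMod n} {a : EdgeState}
    (ha : a ≠ none) (h : E n es i = a) : E n (es.set j (some d)) i = a := by
  rw [E_set hlen hj]
  by_cases hij : i = (j : ZMod n)
  · rw [hij] at h; rw [h] at hE; exact absurd hE ha
  · rw [if_neg hij]; exact h

/-- CycleOK in terms of E, for sourceAllowed = true. -/
lemma cycleOK_iff {n : ℕ} {es : List EdgeState} (hn : 2 ≤ n) (hlen : es.length = n) :
    CycleOK true es ↔
      ∀ i : ZMod n, ¬ (E n es i = some true ∧ E n es (i+1) = some false) := by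
  haveI : NeZero n := ⟨by omega⟩
  constructor
  · intro h i
    have hi : i.val < es.length := by rw [hlen]; exact ZMod.val_lt i
    have h2 := (h i.val hi).1
    rw [Eget' hlen (by omega) i] at h2
    have hmod : (i.val + 1) % es.length = (i+1).val := by
      rw [hlen]
      have : (i : ZMod n) + 1 = ((i.val + 1 : ℕ) : ZMod n) := by
        push_cast [ZMod.natCast_rightInverse i]; ring
      rw [this, ZMod.val_natCast]
    rw [hmod, Eget' hlen (by omega) (i+1)] at h2
    intro ⟨ha, hb⟩
    exact h2 ⟨by rw [ha], by rw [hb]⟩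
  · intro h j hj
    refine ⟨?_, Or.inl rfl⟩
    have hjn : j < n := by omega
    have hmod : (j + 1) % es.length = ((j : ZMod n) + 1).val := by
      rw [hlen]
      have : (j : ZMod n) + 1 = ((j + 1 : ℕ) : ZMod n) := by push_cast; ring
      rw [this, ZMod.val_natCast]
    rw [Eget hlen hjn, hmod, Eget' hlen (by omega) ((j : ZMod n)+1)]
    intro ⟨ha, hb⟩
    exact h (j : ZMod n) ⟨by injection ha, by injection hb⟩

lemma mem_moves_iff {n : ℕ} {es es' : List EdgeState} (hn : 2 ≤ n) (hlen : es.length = n) :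
    es' ∈ cycleMoves true es ↔
      ∃ (i : ZMod n) (d : Bool), E n es i = none ∧ es' = es.set i.val (some d) ∧
        CycleOK true es' := by
  haveI : NeZero n := ⟨by omega⟩
  constructor
  · rintro ⟨j, d, h1, h2, h3⟩
    have hj : j < n := by
      have := (List.getElem?_eq_some_iff.mp h1).1; omega
    refine ⟨(j : ZMod n), d, ?_, ?_, h3⟩
    · have := Eget hlen hj (es := es)
      rw [h1] at this; injection this with h; exact h.symm
    · rw [ZMod.val_cast_of_lt hj]; exact h2
  · rintro ⟨i, d, h1, h2, h3⟩
    exact ⟨i.val, d, by rw [Eget' hlen (by omega) i, h1], h2, h3⟩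



def Inv (n : ℕ) (c : ZMod n) (es : List EdgeState) : Prop :=
  es.length = n ∧
  (∀ k, marked n es k ↔ hitV n es (c - k)) ∧
  (∀ j, 2*j + 1 = c → (marked n es j ∨ hitV n es (j+1))) ∧
  (∀ j, 2*j = c → (marked n es j ∨ hitV n es j))


lemma step {n : ℕ} (hn : 2 ≤ n) {c : ZMod n} {es y : List EdgeState}
    (hInv : Inv n c es) (hy : y ∈ cycleMoves true es) :
    ∃ z ∈ cycleMoves true y, Inv n c z := by
  haveI : NeZero n := ⟨by omega⟩
  obtain ⟨hlen, hS, hD1, hD2⟩ := hInv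
  obtain ⟨i, d, hE, hyeq, hOK⟩ := (mem_moves_iff hn hlen).mp hy
  set ε : ZMod n := if d then 1 else 0 with hε
  have hleny : y.length = n := by rw [hyeq, List.length_set]; exact hlen
  have hivlt : i.val < n := ZMod.val_lt i
  have hcast : ((i.val : ℕ) : ZMod n) = i := ZMod.natCast_rightInverse i
  have hEcast : E n es ((i.val : ℕ) : ZMod n) = none := by rw [hcast]; exact hE
  have hEy : ∀ k, E n y k = if k = i then some d else E n es k := by
    intro k; rw [hyeq, E_set hlen hivlt, hcast]
  have hOKy := (cycleOK_iff hn hleny).mp hOK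
  -- head vertex of opponent's move is unhit in es
  have legal1 : ¬ hitV n es (i + ε) := by
    cases d
    · simp only [hε, Bool.false_eq_true, if_false, add_zero]
      rintro (h | h)
      · refine hOKy (i-1) ⟨?_, ?_⟩
        · rw [hEy, if_neg (sub_one_ne_self hn i)]; exact h
        · rw [sub_add_cancel, hEy, if_pos rfl]
      · rw [hE] at h; cases h
    · simp only [hε, if_true]
      rintro (h | h)
      · rw [add_sub_cancel_right, hE] at h; cases h
      · refine hOKy i ⟨?_, ?_⟩
        · rw [hEy, if_pos rfl]
        · rw [hEy, if_neg (add_one_ne_self hn i)]; exact h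
  have hnm : ¬ marked n es i := by intro hm; exact hm hE
  have notc : 2*i + ε ≠ c := by
    intro hc
    cases d
    · simp only [hε, Bool.false_eq_true, if_false, add_zero] at hc legal1
      rcases hD2 i hc with h | h
      · exact hnm h
      · exact legal1 h
    · simp only [hε, if_true] at hc legal1
      rcases hD1 i hc with h | h
      · exact hnm h
      · exact legal1 h
  set e' : ZMod n := c - i - ε with he'
  have hce' : c - e' = i + ε := by rw [he']; ring
  have he2 : e' + ε = c - i := by rw [he']; ring
  have hne1 : e' ≠ i := by
    intro h
    exact notc (by rw [he'] at h; linear_combination -h)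
  have hEye' : E n y e' = none := by
    rw [hEy, if_neg hne1]
    have hm : ¬ marked n es e' := by
      intro hm
      exact legal1 (hce' ▸ (hS e').mp hm)
    exact not_ne_iff.mp hm
  have hhead : ¬ hitV n y (c - i) := by
    rw [hyeq, hitV_set hn hlen hivlt hEcast, hcast]
    rintro (h | h)
    · exact hnm ((hS i).mpr h)
    · exact notc (by linear_combination -h)
  have he'vlt : e'.val < n := ZMod.val_lt e'
  have he'cast : ((e'.val : ℕ) : ZMod n) = e' := ZMod.natCast_rightInverse e'
  have hEye'cast : E n y ((e'.val : ℕ) : ZMod n) = none := by rw [he'cast]; exact hEye'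
  set z := y.set e'.val (some d) with hz
  have hlenz : z.length = n := by rw [hz, List.length_set]; exact hleny
  have hEz : ∀ k, E n z k = if k = e' then some d else E n y k := by
    intro k; rw [hz, E_set hleny he'vlt, he'cast]
  have hOKz : CycleOK true z := by
    rw [cycleOK_iff hn hlenz]
    rintro k ⟨hA, hB⟩
    by_cases hk : k = e'
    · rw [hEz, if_pos hk] at hA
      have hd : d = true := by injection hA
      subst hd
      rw [hEz, if_neg (by rw [hk]; exact add_one_ne_self hn e')] at hB
      apply hhead
      right
      rw [← he2]
      simp only [hε, if_true]
      rw [← hk]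
      exact hB
    · by_cases hk1 : k + 1 = e'
      · rw [hEz, if_pos hk1] at hB
        have hd : d = false := by injection hB
        subst hd
        rw [hEz, if_neg hk] at hA
        apply hhead
        left
        have he2' : e' = c - i := by rw [← he2]; simp [hε]
        rw [← he2']
        have hk' : k = e' - 1 := by linear_combination hk1
        rw [← hk']
        exact hA
      · rw [hEz, if_neg hk] at hA
        rw [hEz, if_neg hk1] at hB
        exact hOKy k ⟨hA, hB⟩
  have hmem : z ∈ cycleMoves true y :=
    (mem_moves_iff hn hleny).mpr ⟨e', d, hEye', hz, hOKz⟩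
  have hmz : ∀ k, marked n z k ↔ marked n es k ∨ k = i ∨ k = e' := by
    intro k
    rw [hz, marked_set hleny he'vlt, he'cast, hyeq, marked_set hlen hivlt, hcast]
    tauto
  have hhz : ∀ v, hitV n z v ↔ hitV n es v ∨ v = i + ε ∨ v = e' + ε := by
    intro v
    rw [hz, hitV_set hn hleny he'vlt hEye'cast, he'cast, hyeq,
      hitV_set hn hlen hivlt hEcast, hcast]
    simp only [hε]
    tauto
  refine ⟨z, hmem, hlenz, ?_, ?_, ?_⟩
  · intro k
    rw [hmz, hhz]
    have k1 : (c - k = i + ε) ↔ k = e' := by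
      constructor <;> intro h
      · rw [he']; linear_combination -h
      · rw [h, hce']
    have k2 : (c - k = e' + ε) ↔ k = i := by
      rw [he2]
      constructor <;> intro h <;> linear_combination -h
    rw [k1, k2, hS k]
    tauto
  · intro j hj
    rcases hD1 j hj with h | h
    · exact Or.inl ((hmz j).mpr (Or.inl h))
    · exact Or.inr ((hhz _).mpr (Or.inl h))
  · intro j hj
    rcases hD2 j hj with h | h
    · exact Or.inl ((hmz j).mpr (Or.inl h))
    · exact Or.inr ((hhz _).mpr (Or.inl h))



lemma odd_cancel {n : ℕ} (hodd : n % 2 = 1) {a b : ZMod n} (h : 2*a = 2*b) : a = b := by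
  have h2 : ((2 : ℕ) : ZMod n) * (((n+1)/2 : ℕ) : ZMod n) = 1 := by
    rw [← Nat.cast_mul]
    have : 2 * ((n+1)/2) = n + 1 := by omega
    rw [this]
    push_cast [ZMod.natCast_self]
    ring
  have := congrArg (fun x => (((n+1)/2 : ℕ) : ZMod n) * x) h
  calc a = ((((n+1)/2 : ℕ) : ZMod n) * 2) * a := by rw [mul_comm _ (2 : ZMod n)]; push_cast at h2 ⊢; rw [h2, one_mul]
    _ = (((n+1)/2 : ℕ) : ZMod n) * (2*a) := by ring
    _ = (((n+1)/2 : ℕ) : ZMod n) * (2*b) := by rw [h]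
    _ = ((((n+1)/2 : ℕ) : ZMod n) * 2) * b := by ring
    _ = b := by rw [mul_comm _ (2 : ZMod n)]; push_cast at h2 ⊢; rw [h2, one_mul]

lemma even_cancel {n : ℕ} (hn : 2 ≤ n) (heven : n % 2 = 0) {a b : ZMod n} (h : 2*a = 2*b) :
    a = b ∨ a = b + ((n/2 : ℕ) : ZMod n) := by
  haveI : NeZero n := ⟨by omega⟩
  set t := a - b with ht
  have h0 : 2 * t = 0 := by rw [ht]; linear_combination h
  have hcast : ((t.val : ℕ) : ZMod n) = t := ZMod.natCast_rightInverse t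
  have h1 : (((2 * t.val : ℕ)) : ZMod n) = 0 := by push_cast [hcast]; exact h0
  have hdvd : n ∣ 2 * t.val := (ZMod.natCast_eq_zero_iff _ n).mp h1
  have hlt : t.val < n := ZMod.val_lt t
  obtain ⟨k, hk⟩ := hdvd
  have hk2 : k < 2 := by
    by_contra hk2
    have : n * 2 ≤ n * k := Nat.mul_le_mul_left n (by omega)
    omega
  have : t.val = 0 ∨ t.val = n / 2 := by
    interval_cases k <;> omega
  rcases this with h2 | h2
  · left
    have : t = 0 := by rw [← hcast, h2]; simp
    rw [ht] at this
    linear_combination this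
  · right
    have : t = ((n/2 : ℕ) : ZMod n) := by rw [← hcast, h2]
    rw [ht] at this
    linear_combination this

lemma even_no_half {n : ℕ} (hn : 2 ≤ n) (heven : n % 2 = 0) (a b : ZMod n) :
    2*a ≠ 2*b + 1 := by
  intro h
  have hdvd : (2 : ℕ) ∣ n := by omega
  have := congrArg (ZMod.castHom hdvd (ZMod 2)) h
  simp only [map_add, map_mul, map_one, map_ofNat] at this
  have h2 : ((2 : ZMod 2)) = 0 := by decide
  rw [h2, zero_mul, zero_mul, zero_add] at this
  exact absurd this (by decide)

lemma setup {n : ℕ} (hn : 2 ≤ n) {y : List EdgeState}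
    (hy : y ∈ cycleMoves true (List.replicate n none)) :
    ∃ c : ZMod n, ∃ z ∈ cycleMoves true y, Inv n c z := by
  haveI : NeZero n := ⟨by omega⟩
  have hlen0 : (List.replicate n (none : EdgeState)).length = n := List.length_replicate
  obtain ⟨i, d, hE0, hyeq, hOKy'⟩ := (mem_moves_iff hn hlen0).mp hy
  set ε : ZMod n := if d then 1 else 0 with hε
  set c : ZMod n := 2*i + ε with hc
  -- the response
  set m : ℕ := if n % 2 = 0 then n/2 else (if d then (n+1)/2 else (n-1)/2) with hm
  set d'' : Bool := if n % 2 = 0 then d else !d with hd''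
  set ε'' : ZMod n := if d'' then 1 else 0 with hε''
  set r : ZMod n := i + (m : ZMod n) with hr
  have hivlt : i.val < n := ZMod.val_lt i
  have hcast : ((i.val : ℕ) : ZMod n) = i := ZMod.natCast_rightInverse i
  have hleny : y.length = n := by rw [hyeq, List.length_set]; exact hlen0
  have hE0cast : E n (List.replicate n none) ((i.val : ℕ) : ZMod n) = none := E_replicate _
  have hEy : ∀ k, E n y k = if k = i then some d else none := by
    intro k; rw [hyeq, E_set hlen0 hivlt, hcast, E_replicate]
  have hmlt : 0 < m ∧ m < n := by
    by_cases h2 : n % 2 = 0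
    · rw [hm, if_pos h2]; omega
    · rw [hm, if_neg h2]
      have h3 : 3 ≤ n := by omega
      cases d
      · simp only [Bool.false_eq_true, if_false]; omega
      · simp only [if_true]; omega
  have hmcast : ((m : ℕ) : ZMod n).val = m := ZMod.val_cast_of_lt hmlt.2
  -- f1 : node identity
  have hcm : 2 * ((m:ℕ) : ZMod n) = ((2*m : ℕ) : ZMod n) := by push_cast; ring
  have f1 : 2*r + ε'' = c := by
    by_cases h2 : n % 2 = 0
    · have hds : d'' = d := by rw [hd'', if_pos h2]
      have hmm : (2*m : ℕ) = n := by rw [hm, if_pos h2]; omega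
      have hz : 2 * ((m:ℕ) : ZMod n) = 0 := by rw [hcm, hmm, ZMod.natCast_self]
      rw [hr, hc, hε'', hds, ← hε]
      linear_combination hz
    · cases d
      · have hds : d'' = true := by rw [hd'', if_neg h2]; simp
        have hmm : (2*m : ℕ) = n - 1 := by
          rw [hm, if_neg h2]; simp only [Bool.false_eq_true, if_false]; omega
        have hv : ((n-1 : ℕ) : ZMod n) = -1 := by
          rw [Nat.cast_sub (by omega : 1 ≤ n), ZMod.natCast_self, Nat.cast_one]; ring
        have hz : 2*((m:ℕ):ZMod n) = -1 := by rw [hcm, hmm, hv]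
        have hev : ε'' = 1 := by rw [hε'', hds]; simp
        have he : ε = 0 := by rw [hε]; simp
        rw [hr, hc, hev, he]
        linear_combination hz
      · have hds : d'' = false := by rw [hd'', if_neg h2]; simp
        have hmm : (2*m : ℕ) = n + 1 := by
          rw [hm, if_neg h2]; simp only [if_true]; omega
        have hv : ((n+1 : ℕ) : ZMod n) = 1 := by push_cast [ZMod.natCast_self]; ring
        have hz : 2*((m:ℕ):ZMod n) = 1 := by rw [hcm, hmm, hv]
        have hev : ε'' = 0 := by rw [hε'', hds]; simp
        have he : ε = 1 := by rw [hε]; simp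
        rw [hr, hc, hev, he]
        linear_combination hz
  have f2 : r ≠ i := by
    rw [hr]
    intro h
    have h0 : ((m : ℕ) : ZMod n) = 0 := by linear_combination h
    have h1 : ((m : ℕ) : ZMod n).val = 0 := by rw [h0, ZMod.val_zero]
    omega
  have f3 : r + ε'' ≠ i + ε := by
    intro h
    apply f2
    have : 2*r + ε'' = 2*i + ε := by rw [f1, hc]
    linear_combination this - h
  -- the response move
  have hrvlt : r.val < n := ZMod.val_lt r
  have hrcast : ((r.val : ℕ) : ZMod n) = r := ZMod.natCast_rightInverse r
  have hEyr : E n y r = none := by rw [hEy, if_neg f2]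
  have hEyrcast : E n y ((r.val : ℕ) : ZMod n) = none := by rw [hrcast]; exact hEyr
  set z := y.set r.val (some d'') with hz
  have hlenz : z.length = n := by rw [hz, List.length_set]; exact hleny
  have hEz : ∀ k, E n z k = if k = r then some d'' else if k = i then some d else none := by
    intro k; rw [hz, E_set hleny hrvlt, hrcast, hEy]
  have hOKz : CycleOK true z := by
    rw [cycleOK_iff hn hlenz]
    rintro k ⟨hA, hB⟩
    rw [hEz] at hA hB
    by_cases hk : k = r
    · rw [if_pos hk] at hA
      have hdt : d'' = true := by injection hA
      have hk1 : ¬ (k + 1 = r) := by rw [hk]; exact add_one_ne_self hn r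
      rw [if_neg hk1] at hB
      by_cases hki : k + 1 = i
      · rw [if_pos hki] at hB
        have hdf : d = false := by injection hB
        -- d'' = true, d = false: impossible even; odd: m = n-1 vs (n-1)/2
        by_cases h2 : n % 2 = 0
        · have : d'' = d := by rw [hd'', if_pos h2]
          rw [hdt, hdf] at this; cases this
        · have hmm : m = (n-1)/2 := by
            rw [hm, if_neg h2, hdf]; simp
          -- r + 1 = i, r = i + m : m = -1
          have hm1 : ((m : ℕ) : ZMod n) + 1 = 0 := by
            have : r + 1 = i := by rw [← hk]; exact hki
            rw [hr] at this
            linear_combination this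
          have hm2 : (((m+1 : ℕ)) : ZMod n) = 0 := by push_cast; exact hm1
          have hdvd : n ∣ m + 1 := (ZMod.natCast_eq_zero_iff _ n).mp hm2
          have := Nat.le_of_dvd (by omega) hdvd
          omega
      · rw [if_neg hki] at hB; cases hB
    · rw [if_neg hk] at hA
      by_cases hki : k = i
      · rw [if_pos hki] at hA
        have hdt : d = true := by injection hA
        by_cases hk1 : k + 1 = r
        · rw [if_pos hk1] at hB
          have hdf : d'' = false := by injection hB
          by_cases h2 : n % 2 = 0
          · have : d'' = d := by rw [hd'', if_pos h2]
            rw [hdt, hdf] at this; cases this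
          · have hmm : m = (n+1)/2 := by
              rw [hm, if_neg h2, hdt]; simp
            have hm1 : ((m : ℕ) : ZMod n) = 1 := by
              have : i + 1 = r := by rw [← hki]; exact hk1
              rw [hr] at this
              linear_combination -this
            haveI : Fact (1 < n) := ⟨by omega⟩
            have : m = 1 := by
              rw [← hmcast, hm1, ZMod.val_one]
            omega
        · rw [if_neg hk1] at hB
          by_cases hki1 : k + 1 = i
          · rw [hki] at hki1; exact absurd hki1 (add_one_ne_self hn i)
          · rw [if_neg hki1] at hB; cases hB
      · rw [if_neg hki] at hA; cases hA
  have hmemz : z ∈ cycleMoves true y :=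
    (mem_moves_iff hn hleny).mpr ⟨r, d'', hEyr, hz, hOKz⟩
  have h0m : ∀ k, ¬ marked n (List.replicate n (none : EdgeState)) k := by
    intro k hk; exact hk (E_replicate k)
  have h0h : ∀ v, ¬ hitV n (List.replicate n (none : EdgeState)) v := by
    rintro v (h | h) <;> rw [E_replicate] at h <;> cases h
  have hmz : ∀ k, marked n z k ↔ k = i ∨ k = r := by
    intro k
    rw [hz, marked_set hleny hrvlt, hrcast, hyeq, marked_set hlen0 hivlt, hcast]
    have := h0m k
    tauto
  have hhz : ∀ v, hitV n z v ↔ v = i + ε ∨ v = r + ε'' := by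
    intro v
    rw [hz, hitV_set hn hleny hrvlt hEyrcast, hrcast, hyeq,
      hitV_set hn hlen0 hivlt hE0cast, hcast]
    have := h0h v
    rw [← hε, ← hε'']
    tauto
  refine ⟨c, z, hmemz, hlenz, ?_, ?_, ?_⟩
  · intro k
    rw [hmz, hhz]
    have k1 : c - k = i + ε ↔ k = i := by
      rw [hc]
      constructor
      · intro h; linear_combination -h
      · intro h; rw [h]; ring
    have k2 : c - k = r + ε'' ↔ k = r := by
      rw [← f1]
      constructor
      · intro h; linear_combination -h
      · intro h; rw [h]; ring
    rw [k1, k2]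
  · intro j hj
    left
    rw [hmz]
    by_cases h2 : n % 2 = 0
    · have hre : r = i + ((n/2 : ℕ) : ZMod n) := by rw [hr, hm, if_pos h2]
      cases d
      · exfalso
        have hεv : ε = 0 := by rw [hε]; simp
        rw [hc, hεv, add_zero] at hj
        exact even_no_half hn h2 i j hj.symm
      · have hεv : ε = 1 := by rw [hε]; simp
        rw [hc, hεv] at hj
        have h2j : 2*j = 2*i := by linear_combination hj
        rcases even_cancel hn h2 h2j with h | h
        · exact Or.inl h
        · exact Or.inr (by rw [h, hre])
    · cases d
      · -- c = 2i, ε'' = 1 : 2j+1 = 2r+1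
        right
        have hds : d'' = true := by rw [hd'', if_neg h2]; simp
        have hε''v : ε'' = 1 := by rw [hε'', hds]; simp
        have h2j : 2*j = 2*r := by
          rw [← f1, hε''v] at hj
          linear_combination hj
        exact odd_cancel (by omega) h2j
      · left
        have hεv : ε = 1 := by rw [hε]; simp
        rw [hc, hεv] at hj
        have h2j : 2*j = 2*i := by linear_combination hj
        exact odd_cancel (by omega) h2j
  · intro j hj
    left
    rw [hmz]
    by_cases h2 : n % 2 = 0
    · have hre : r = i + ((n/2 : ℕ) : ZMod n) := by rw [hr, hm, if_pos h2]
      cases d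
      · have hεv : ε = 0 := by rw [hε]; simp
        rw [hc, hεv, add_zero] at hj
        rcases even_cancel hn h2 hj with h | h
        · exact Or.inl h
        · exact Or.inr (by rw [h, hre])
      · exfalso
        have hεv : ε = 1 := by rw [hε]; simp
        rw [hc, hεv] at hj
        exact even_no_half hn h2 j i hj
    · cases d
      · left
        have hεv : ε = 0 := by rw [hε]; simp
        rw [hc, hεv, add_zero] at hj
        exact odd_cancel (by omega) hj
      · right
        have hds : d'' = false := by rw [hd'', if_neg h2]; simp
        have hε''v : ε'' = 0 := by rw [hε'', hds]; simp
        have h2j : 2*j = 2*r := by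
          rw [← f1, hε''v, add_zero] at hj
          exact hj
        exact odd_cancel (by omega) h2j



lemma loses_of_inv {n : ℕ} (hn : 2 ≤ n) :
    ∀ (k : ℕ) (c : ZMod n) (es : List EdgeState), Inv n c es →
      Loses (cycleMoves true) k es := by
  intro k
  induction k with
  | zero => intro c es _; exact trivial
  | succ k ih =>
    intro c es hInv y hy
    obtain ⟨z, hz, hI⟩ := step hn hInv hy
    exact ⟨z, hz, ih c z hI⟩

def cnt (es : List EdgeState) : ℕ := es.countP (fun x => x.isNone)

lemma cnt_set : ∀ (es : List EdgeState) (j : ℕ) (d : Bool),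
    es[j]? = some none → cnt (es.set j (some d)) + 1 = cnt es := by
  intro es
  induction es with
  | nil => intro j d h; simp at h
  | cons a t ih =>
    intro j d h
    cases j with
    | zero =>
      have ha : a = none := by simpa using h
      subst ha
      simp [cnt, List.countP_cons]
    | succ j =>
      have h' : t[j]? = some none := by simpa using h
      have := ih j d h'
      simp only [List.set, cnt, List.countP_cons] at *
      omega

lemma cnt_pos {es : List EdgeState} {j : ℕ} (h : es[j]? = some none) : 0 < cnt es := by
  rw [cnt, List.countP_pos_iff]
  exact ⟨none, List.mem_of_getElem? h, rfl⟩

lemma cnt_replicate (n : ℕ) : cnt (List.replicate n (none : EdgeState)) = n := by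
  induction n with
  | zero => rfl
  | succ n ih => simp [List.replicate_succ, cnt, List.countP_cons] at *; omega

lemma moves_finite (es : List EdgeState) : (cycleMoves true es).Finite := by
  apply Set.Finite.subset
    (Set.Finite.image (fun p : ℕ × Bool => es.set p.1 (some p.2))
      (Set.Finite.prod (Set.finite_Iio es.length) Set.finite_univ))
  rintro x ⟨j, d, h1, h2, _⟩
  have hj : j < es.length := (List.getElem?_eq_some_iff.mp h1).1
  exact ⟨(j, d), ⟨hj, trivial⟩, h2.symm⟩

lemma mex_eq_zero {S : Set ℕ} (h : 0 ∉ S) : mex S = 0 :=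
  Nat.sInf_eq_zero.mpr (Or.inl h)

lemma mex_ne_zero {S : Set ℕ} (hfin : S.Finite) (h0 : 0 ∈ S) : mex S ≠ 0 := by
  have hne : {n | n ∉ S}.Nonempty := hfin.infinite_compl.nonempty
  have hmem := Nat.sInf_mem hne
  intro h
  rw [mex] at h
  rw [h] at hmem
  exact hmem h0

lemma grundy_zero_of_inv {n : ℕ} (hn : 2 ≤ n) :
    ∀ (k : ℕ) (c : ZMod n) (es : List EdgeState), Inv n c es → cnt es ≤ k →
      grundyAux (cycleMoves true) k es = 0 := by
  intro k
  induction k using Nat.strong_induction_on with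
  | _ k ih =>
  intro c es hInv hcnt
  match k, hcnt with
  | 0, _ => rfl
  | (k+1), hcnt =>
    show mex _ = 0
    apply mex_eq_zero
    rintro ⟨y, hy, hgy⟩
    obtain ⟨z, hzy, hIz⟩ := step hn hInv hy
    obtain ⟨j, d, h1, h2, hok⟩ := hy
    have hcy : cnt y + 1 = cnt es := by rw [h2]; exact cnt_set es j d h1
    obtain ⟨j2, d2, h12, h22, hok2⟩ := hzy
    have hcz : cnt z + 1 = cnt y := by rw [h22]; exact cnt_set y j2 d2 h12
    have hy1 : 0 < cnt y := cnt_pos h12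
    match k, hcnt with
    | 0, hcnt => omega
    | (k'+1), hcnt =>
      have heq : grundyAux (cycleMoves true) (k'+1) y
          = mex ((grundyAux (cycleMoves true) k') '' (cycleMoves true y)) := rfl
      apply mex_ne_zero ((moves_finite y).image _)
        ⟨z, ⟨j2, d2, h12, h22, hok2⟩, ih k' (by omega) c z hIz (by omega)⟩
      rw [← heq]
      exact hgy


end CWS

/-- For every `n ≥ 2`, the Grundy value of Cycles with Sources on
a single cycle with `n` edges is `0`; in particular the first player (the player to
move in the fully unmarked position) loses, i.e. the second player always wins. -/
theorem cws_cycle_nimber_zero (n : ℕ) (hn : 2 ≤ n) :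
    cycleNim true n = 0 ∧
    Loses (cycleMoves true) n (List.replicate n none) := by
  obtain ⟨k, rfl⟩ : ∃ k, n = k + 2 := ⟨n - 2, by omega⟩
  constructor
  · show mex _ = 0
    apply CWS.mex_eq_zero
    rintro ⟨y, hy, hgy⟩
    obtain ⟨c, z, hz, hI⟩ := CWS.setup hn hy
    obtain ⟨j2, d2, h12, h22, hok2⟩ := hz
    have hcy : CWS.cnt y + 1 = CWS.cnt (List.replicate (k+2) none) := by
      obtain ⟨j, d, h1, h2, hok⟩ := hy
      rw [h2]; exact CWS.cnt_set _ j d h1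
    have hcz : CWS.cnt z + 1 = CWS.cnt y := by rw [h22]; exact CWS.cnt_set y j2 d2 h12
    have hrep := CWS.cnt_replicate (k+2)
    have heq : grundyAux (cycleMoves true) (k+1) y
        = mex ((grundyAux (cycleMoves true) k) '' (cycleMoves true y)) := rfl
    apply CWS.mex_ne_zero ((CWS.moves_finite y).image _)
      ⟨z, ⟨j2, d2, h12, h22, hok2⟩,
        CWS.grundy_zero_of_inv hn k c z hI (by omega)⟩
    rw [← heq]
    exact hgy
  · intro y hy
    obtain ⟨c, z, hz, hI⟩ := CWS.setup hn hy
    exact ⟨z, hz, CWS.loses_of_inv hn (k+1) c z hI⟩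
end
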